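/- arXiv:2010.06779 — 4 statements merged into one kernel-verified Lean document; each statement's English description precedes it below -/
import Mathlib

section
/- Let A be a real symmetric matrix (the weighted adjacency matrix of a graph) and let x and y be distinct strongly cospectral vertices. Suppose that one of P₊, P₋ is divisible by a product f·g of nonconstant monic real polynomials whose traces tr(f) and tr(g) are integers, with tr(f) odd and tr(f)·deg(g) − tr(g)·deg(f) odd, and that the other of P₊, P₋ has a monic factor h of odd degree whose trace tr(h) is an integer. Then there is no pretty good state transfer from x to y. -/
open Matrix Polynomial

/-- The transition matrix `U(t) = exp(i t A)`. -/
noncomputable def transition {V : Type*} [Fintype V] [DecidableEq V]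
    (A : Matrix V V ℝ) (t : ℝ) : Matrix V V ℂ :=
  NormedSpace.exp (((t : ℂ) * Complex.I) • A.map (fun a => (a : ℂ)))

/-- Pretty good state transfer from `x` to `y`. -/
def PGST {V : Type*} [Fintype V] [DecidableEq V] (A : Matrix V V ℝ) (x y : V) : Prop :=
  ∀ ε : ℝ, 0 < ε → ∃ t : ℝ, 0 < t ∧ 1 - ε < ‖transition A t x y‖

/-- `E` is the orthogonal projection matrix onto the eigenspace `{v : A v = θ v}`:
it is symmetric, idempotent, its range is contained in the eigenspace, and it fixes
the eigenspace pointwise. -/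
def IsEigenprojection {V : Type*} [Fintype V] [DecidableEq V]
    (A : Matrix V V ℝ) (θ : ℝ) (E : Matrix V V ℝ) : Prop :=
  E.IsSymm ∧ E * E = E ∧ (∀ v : V → ℝ, A *ᵥ (E *ᵥ v) = θ • (E *ᵥ v)) ∧
    (∀ v : V → ℝ, A *ᵥ v = θ • v → E *ᵥ v = v)

/-- Vertices `x` and `y` are strongly cospectral: for every eigenvalue `θ` of `A`,
`E_θ e_x = ± E_θ e_y`. -/
def StronglyCospectral {V : Type*} [Fintype V] [DecidableEq V]
    (A : Matrix V V ℝ) (x y : V) : Prop :=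
  ∀ (θ : ℝ) (E : Matrix V V ℝ), IsEigenprojection A θ E →
    E *ᵥ Pi.single x 1 = E *ᵥ Pi.single y 1 ∨ E *ᵥ Pi.single x 1 = -(E *ᵥ Pi.single y 1)

/-- `P` is the minimal polynomial of `A` relative to the vector `z`:
the monic polynomial of least degree with `P(A) z = 0`. -/
def IsRelMinpoly {V : Type*} [Fintype V] [DecidableEq V]
    (A : Matrix V V ℝ) (z : V → ℝ) (P : Polynomial ℝ) : Prop :=
  P.Monic ∧ (Polynomial.aeval A P) *ᵥ z = 0 ∧
    ∀ Q : Polynomial ℝ, Q.Monic → (Polynomial.aeval A Q) *ᵥ z = 0 → P.degree ≤ Q.degree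

/-- The trace of a monic polynomial with all roots real: the sum of its roots,
i.e. minus the coefficient of the second-highest term. -/
noncomputable def ptrace (P : Polynomial ℝ) : ℝ := -(P.coeff (P.natDegree - 1))

namespace PGSTAux
variable {V : Type*} [Fintype V] [DecidableEq V]
section Spectral
variable {A : Matrix V V ℝ} (hH : A.IsHermitian)
noncomputable def W : Matrix V V ℝ := (Matrix.IsHermitian.eigenvectorUnitary hH : Matrix V V ℝ)
lemma W_mul_star : W hH * (W hH)ᵀ = 1 := by
  have h := (Matrix.mem_unitaryGroup_iff).mp (Matrix.IsHermitian.eigenvectorUnitary hH).2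
  simpa [W, Matrix.star_eq_conjTranspose] using h
lemma star_mul_W : (W hH)ᵀ * W hH = 1 := by
  have h := (Matrix.mem_unitaryGroup_iff').mp (Matrix.IsHermitian.eigenvectorUnitary hH).2
  simpa [W, Matrix.star_eq_conjTranspose] using h
lemma spectral : A = W hH * diagonal hH.eigenvalues * (W hH)ᵀ := by
  have h := hH.spectral_theorem
  simpa [W, Matrix.star_eq_conjTranspose] using h
noncomputable def Ep (θ : ℝ) : Matrix V V ℝ :=
  W hH * diagonal (fun i => if hH.eigenvalues i = θ then (1:ℝ) else 0) * (W hH)ᵀ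

lemma sandwich_mul (d e : V → ℝ) :
    (W hH * diagonal d * (W hH)ᵀ) * (W hH * diagonal e * (W hH)ᵀ)
      = W hH * diagonal (fun i => d i * e i) * (W hH)ᵀ := by
  have : diagonal d * ((W hH)ᵀ * W hH) * diagonal e = diagonal (fun i => d i * e i) := by
    rw [star_mul_W hH, mul_one, diagonal_mul_diagonal]
  calc (W hH * diagonal d * (W hH)ᵀ) * (W hH * diagonal e * (W hH)ᵀ)
      = W hH * (diagonal d * ((W hH)ᵀ * W hH) * diagonal e) * (W hH)ᵀ := by
        simp only [Matrix.mul_assoc]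
    _ = _ := by rw [this]

lemma Ep_mul_self (θ : ℝ) : Ep hH θ * Ep hH θ = Ep hH θ := by
  simp only [Ep]
  rw [sandwich_mul]
  have : (fun i => (if hH.eigenvalues i = θ then (1:ℝ) else 0) *
      (if hH.eigenvalues i = θ then (1:ℝ) else 0))
      = (fun i => if hH.eigenvalues i = θ then (1:ℝ) else 0) := by
    ext i
    by_cases h : hH.eigenvalues i = θ <;> simp [h]
  rw [this]

lemma Ep_mul_ne {θ μ : ℝ} (hne : θ ≠ μ) : Ep hH θ * Ep hH μ = 0 := by
  simp only [Ep]
  rw [sandwich_mul]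
  have : (fun i => (if hH.eigenvalues i = θ then (1:ℝ) else 0) *
      (if hH.eigenvalues i = μ then (1:ℝ) else 0)) = fun _ => 0 := by
    ext i
    by_cases h : hH.eigenvalues i = θ <;> by_cases h' : hH.eigenvalues i = μ <;>
      simp_all
  rw [this]
  simp

lemma A_mul_Ep (θ : ℝ) : A * Ep hH θ = θ • Ep hH θ := by
  have h1 : A * Ep hH θ = W hH * diagonal
      (fun i => hH.eigenvalues i * (if hH.eigenvalues i = θ then (1:ℝ) else 0)) * (W hH)ᵀ := by
    simp only [Ep]
    calc A * (W hH * diagonal (fun i => if hH.eigenvalues i = θ then (1:ℝ) else 0) * (W hH)ᵀ)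
        = (W hH * diagonal hH.eigenvalues * (W hH)ᵀ) *
          (W hH * diagonal (fun i => if hH.eigenvalues i = θ then (1:ℝ) else 0) * (W hH)ᵀ) := by
          rw [← spectral hH]
      _ = _ := sandwich_mul hH _ _
  have h2 : (fun i => hH.eigenvalues i * (if hH.eigenvalues i = θ then (1:ℝ) else 0))
      = fun i => θ * (if hH.eigenvalues i = θ then (1:ℝ) else 0) := by
    ext i
    by_cases h : hH.eigenvalues i = θ <;> simp [h]
  have h3 : diagonal (fun i => θ * (if hH.eigenvalues i = θ then (1:ℝ) else 0))
      = θ • diagonal (fun i => if hH.eigenvalues i = θ then (1:ℝ) else 0) := by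
    ext i j
    by_cases hij : i = j <;> simp [Matrix.diagonal_apply, hij]
  rw [h1, h2, h3, Ep, Matrix.mul_smul, Matrix.smul_mul]

lemma Ep_symm (θ : ℝ) : (Ep hH θ).IsSymm := by
  rw [Matrix.IsSymm, Ep]
  rw [Matrix.transpose_mul, Matrix.transpose_mul, Matrix.transpose_transpose,
    Matrix.diagonal_transpose, Matrix.mul_assoc]

/-- the set of eigenvalues -/
noncomputable def Θ : Finset ℝ := Finset.image hH.eigenvalues Finset.univ

lemma sum_Ep : ∑ θ ∈ Θ hH, Ep hH θ = 1 := by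
  have : ∑ θ ∈ Θ hH, Ep hH θ
      = W hH * (∑ θ ∈ Θ hH, diagonal (fun i => if hH.eigenvalues i = θ then (1:ℝ) else 0)) * (W hH)ᵀ := by
    rw [Finset.mul_sum, Finset.sum_mul]
    rfl
  rw [this]
  have h2 : (∑ θ ∈ Θ hH, diagonal (fun i => if hH.eigenvalues i = θ then (1:ℝ) else 0)) = 1 := by
    ext i j
    simp only [Matrix.sum_apply, Matrix.diagonal_apply, Matrix.one_apply]
    by_cases hij : i = j
    · simp [hij, Finset.sum_ite_eq', Θ]
    · simp [hij]
  rw [h2, mul_one, W_mul_star]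

lemma A_mulVec_Ep (θ : ℝ) (v : V → ℝ) :
    A *ᵥ (Ep hH θ *ᵥ v) = θ • (Ep hH θ *ᵥ v) := by
  rw [Matrix.mulVec_mulVec, A_mul_Ep hH θ, Matrix.smul_mulVec]

lemma Ep_fix (θ : ℝ) (v : V → ℝ) (hv : A *ᵥ v = θ • v) : Ep hH θ *ᵥ v = v := by
  set u := (W hH)ᵀ *ᵥ v with hu
  have hWu : W hH *ᵥ u = v := by
    rw [hu, Matrix.mulVec_mulVec, W_mul_star hH, Matrix.one_mulVec]
  have hDu : ∀ i, hH.eigenvalues i * u i = θ * u i := by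
    intro i
    have h1 : (W hH)ᵀ *ᵥ (A *ᵥ v) = (W hH)ᵀ *ᵥ (θ • v) := by rw [hv]
    have h2 : (W hH)ᵀ *ᵥ (A *ᵥ v) = diagonal hH.eigenvalues *ᵥ u := by
      conv_lhs => rw [Matrix.mulVec_mulVec]
      have : (W hH)ᵀ * A = diagonal hH.eigenvalues * (W hH)ᵀ := by
        calc (W hH)ᵀ * A
            = (W hH)ᵀ * (W hH * diagonal hH.eigenvalues * (W hH)ᵀ) := by rw [← spectral hH]
          _ = diagonal hH.eigenvalues * (W hH)ᵀ := by
              rw [← Matrix.mul_assoc, ← Matrix.mul_assoc, star_mul_W hH, Matrix.one_mul]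
      rw [this, ← Matrix.mulVec_mulVec]
    have h3 : (W hH)ᵀ *ᵥ (θ • v) = θ • u := by
      rw [Matrix.mulVec_smul]
    rw [h2, h3] at h1
    have := congrFun h1 i
    simpa [Matrix.mulVec_diagonal] using this
  have hDθu : (diagonal (fun i => if hH.eigenvalues i = θ then (1:ℝ) else 0)) *ᵥ u = u := by
    funext i
    rw [Matrix.mulVec_diagonal]
    by_cases h : hH.eigenvalues i = θ
    · simp [h]
    · have : u i = 0 := by
        have h4 := hDu i
        have h5 : (hH.eigenvalues i - θ) * u i = 0 := by ring_nf; linarith [h4]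
        rcases mul_eq_zero.mp h5 with h6 | h6
        · exact absurd (by linarith) h
        · exact h6
      simp [h, this]
  calc Ep hH θ *ᵥ v
      = W hH *ᵥ ((diagonal (fun i => if hH.eigenvalues i = θ then (1:ℝ) else 0)) *ᵥ u) := by
        rw [Ep, ← Matrix.mulVec_mulVec, ← Matrix.mulVec_mulVec]
    _ = v := by rw [hDθu, hWu]

lemma Ep_isEigenprojection (θ : ℝ) : IsEigenprojection A θ (Ep hH θ) :=
  ⟨Ep_symm hH θ, Ep_mul_self hH θ, A_mulVec_Ep hH θ, Ep_fix hH θ⟩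

end Spectral
section Sigma
variable {A : Matrix V V ℝ} (hH : A.IsHermitian) (x y : V)

/-- the sign of the eigenprojection relation -/
noncomputable def sg (θ : ℝ) : ℝ :=
  if Ep hH θ *ᵥ Pi.single x 1 = Ep hH θ *ᵥ Pi.single y 1 then 1 else -1

lemma sg_one_or_neg (θ : ℝ) : sg hH x y θ = 1 ∨ sg hH x y θ = -1 := by
  unfold sg; split <;> simp

lemma sg_abs (θ : ℝ) : ‖((sg hH x y θ : ℝ) : ℂ)‖ = 1 := by
  rcases sg_one_or_neg hH x y θ with h | h <;> rw [h] <;> simp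

lemma Ep_single_eq (hsc : StronglyCospectral A x y) (θ : ℝ) :
    Ep hH θ *ᵥ Pi.single x 1 = sg hH x y θ • (Ep hH θ *ᵥ Pi.single y 1) := by
  unfold sg
  split
  · rename_i hc; rw [hc, one_smul]
  · rename_i hc
    rcases hsc θ (Ep hH θ) (Ep_isEigenprojection hH θ) with h | h
    · exact absurd h hc
    · rw [h]; funext i; simp

/-- diagonal entry of the eigenprojection -/
noncomputable def pp (θ : ℝ) : ℝ := Ep hH θ x x

lemma Ep_apply_symm (θ : ℝ) (i j : V) : Ep hH θ i j = Ep hH θ j i := by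
  have h := Ep_symm hH θ
  rw [Matrix.IsSymm] at h
  conv_lhs => rw [← h]
  rfl

lemma pp_eq_sum_sq (θ : ℝ) : pp hH x θ = ∑ i, (Ep hH θ x i)^2 := by
  have h := Ep_mul_self hH θ
  have h2 : Ep hH θ x x = ∑ i, Ep hH θ x i * Ep hH θ i x := by
    conv_lhs => rw [← h]
    rfl
  rw [pp, h2]
  congr 1; funext i
  rw [Ep_apply_symm hH θ i x]; ring

lemma pp_nonneg (θ : ℝ) : 0 ≤ pp hH x θ := by
  rw [pp_eq_sum_sq]
  exact Finset.sum_nonneg fun i _ => sq_nonneg _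

lemma mulVec_single_eq (M : Matrix V V ℝ) (j : V) : M *ᵥ Pi.single j 1 = fun i => M i j := by
  funext i
  simp [Matrix.mulVec_single]

lemma pp_pos_of_ne (θ : ℝ) (hne : Ep hH θ *ᵥ Pi.single x 1 ≠ 0) : 0 < pp hH x θ := by
  rcases (pp_nonneg hH x θ).lt_or_eq with h | h
  · exact h
  · exfalso
    apply hne
    have hz : ∀ i, Ep hH θ x i = 0 := by
      intro i
      have hs : ∑ i, (Ep hH θ x i)^2 = 0 := by rw [← pp_eq_sum_sq hH x θ, ← h]
      have := (Finset.sum_eq_zero_iff_of_nonneg (fun i _ => sq_nonneg (Ep hH θ x i))).mp hs i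
        (Finset.mem_univ i)
      exact (pow_eq_zero_iff two_ne_zero).mp this
    rw [mulVec_single_eq]
    funext i
    rw [Ep_apply_symm hH θ i x]
    exact hz i

lemma Ep_xy_eq (hsc : StronglyCospectral A x y) (θ : ℝ) : Ep hH θ x y = sg hH x y θ * pp hH x θ := by
  have h := Ep_single_eq hH x y hsc θ
  have hx := congrFun h x
  rw [mulVec_single_eq, mulVec_single_eq] at h
  have hx' : Ep hH θ x x = sg hH x y θ * Ep hH θ x y := by
    have := congrFun h x
    simpa using this
  rcases sg_one_or_neg hH x y θ with hs | hs <;> rw [hs] at hx' ⊢ <;> rw [pp] <;> linarith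

lemma sum_pp : ∑ θ ∈ Θ hH, pp hH x θ = 1 := by
  have h := sum_Ep hH
  have h2 : (∑ θ ∈ Θ hH, Ep hH θ) x x = (1 : Matrix V V ℝ) x x := by rw [h]
  rw [Matrix.sum_apply] at h2
  simpa [pp, Matrix.one_apply] using h2

end Sigma
section Transition
variable {A : Matrix V V ℝ} (hH : A.IsHermitian)

noncomputable def Wc : Matrix V V ℂ := (W hH).map Complex.ofRealHom

lemma Wc_mul_inv : Wc hH * ((W hH)ᵀ).map Complex.ofRealHom = 1 := by
  rw [Wc, ← Matrix.map_mul, W_mul_star hH]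
  exact Matrix.map_one _ (map_zero _) (map_one _)

lemma Wc_inv_mul : ((W hH)ᵀ).map Complex.ofRealHom * Wc hH = 1 := by
  rw [Wc, ← Matrix.map_mul, star_mul_W hH]
  exact Matrix.map_one _ (map_zero _) (map_one _)

lemma Wc_isUnit : IsUnit (Wc hH) :=
  ⟨⟨Wc hH, ((W hH)ᵀ).map Complex.ofRealHom, Wc_mul_inv hH, Wc_inv_mul hH⟩, rfl⟩

lemma Wc_inv : (Wc hH)⁻¹ = ((W hH)ᵀ).map Complex.ofRealHom :=
  Matrix.inv_eq_right_inv (Wc_mul_inv hH)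

lemma ite_map (θ : ℝ) :
    (diagonal (fun i => if hH.eigenvalues i = θ then (1:ℝ) else 0)).map Complex.ofRealHom
      = diagonal (fun i => if hH.eigenvalues i = θ then (1:ℂ) else 0) := by
  rw [Matrix.diagonal_map (map_zero _)]
  congr 1
  funext i
  by_cases hc : hH.eigenvalues i = θ <;> simp [hc]

lemma Ep_map (θ : ℝ) : (Ep hH θ).map (fun a => (a:ℂ))
    = Wc hH * diagonal (fun i => if hH.eigenvalues i = θ then (1:ℂ) else 0) * (Wc hH)⁻¹ := by
  have h0 : (Ep hH θ).map (fun a => (a:ℂ)) = (Ep hH θ).map Complex.ofRealHom := rfl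
  rw [h0, Wc_inv hH, Ep, Matrix.map_mul, Matrix.map_mul, Wc, ite_map hH θ]

lemma smul_A_map (c : ℂ) : c • A.map (fun a => (a : ℂ))
    = Wc hH * diagonal (fun i => c * hH.eigenvalues i) * (Wc hH)⁻¹ := by
  have h1 : A.map (fun a => (a : ℂ))
      = Wc hH * diagonal (fun i => (hH.eigenvalues i : ℂ)) * (Wc hH)⁻¹ := by
    rw [Wc_inv hH]
    have h0 : A.map (fun a => (a:ℂ)) = A.map Complex.ofRealHom := rfl
    rw [h0]
    conv_lhs => rw [spectral hH]
    rw [Matrix.map_mul, Matrix.map_mul, Wc]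
    congr 1
    congr 1
    rw [Matrix.diagonal_map (map_zero _)]
    rfl
  have h2 : (diagonal (fun i => c * (hH.eigenvalues i : ℂ)))
      = c • diagonal (fun i => (hH.eigenvalues i : ℂ)) := by
    rw [← Matrix.diagonal_smul]
    congr 1
  rw [h1, h2, Matrix.mul_smul, Matrix.smul_mul]

lemma transition_eq (t : ℝ) : transition A t
    = ∑ θ ∈ Θ hH, Complex.exp ((t:ℂ) * Complex.I * θ) • (Ep hH θ).map (fun a => (a : ℂ)) := by
  rw [transition, smul_A_map hH ((t:ℂ) * Complex.I)]
  rw [Matrix.exp_conj (Wc hH) _ (Wc_isUnit hH)]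
  have hexp : NormedSpace.exp (diagonal (fun i => (t:ℂ) * Complex.I * hH.eigenvalues i))
      = diagonal (fun i => Complex.exp ((t:ℂ) * Complex.I * hH.eigenvalues i)) := by
    rw [Matrix.exp_diagonal]
    have : NormedSpace.exp (fun i => (t:ℂ) * Complex.I * hH.eigenvalues i)
        = fun i => Complex.exp ((t:ℂ) * Complex.I * hH.eigenvalues i) := by
      funext i
      rw [Pi.coe_exp, Complex.exp_eq_exp_ℂ]
    rw [this]
  rw [hexp]
  have hdiag : diagonal (fun i => Complex.exp ((t:ℂ) * Complex.I * hH.eigenvalues i))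
      = ∑ θ ∈ Θ hH, Complex.exp ((t:ℂ) * Complex.I * θ) •
          diagonal (fun i => if hH.eigenvalues i = θ then (1:ℂ) else 0) := by
    ext i j
    simp only [Matrix.sum_apply, Matrix.smul_apply, Matrix.diagonal_apply, smul_eq_mul]
    by_cases hij : i = j
    · simp only [hij, if_true]
      rw [Finset.sum_congr rfl (fun θ _ => by rw [mul_ite, mul_one, mul_zero])]
      rw [Finset.sum_ite_eq (Θ hH) (hH.eigenvalues j)
        (fun θ => Complex.exp ((t:ℂ) * Complex.I * θ))]
      simp [Θ]
    · simp [hij]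
  rw [hdiag, Finset.mul_sum, Finset.sum_mul]
  refine Finset.sum_congr rfl (fun θ _ => ?_)
  rw [Matrix.mul_smul, Matrix.smul_mul, Ep_map hH θ]

lemma transition_apply (hsc : StronglyCospectral A x y) (t : ℝ) (x y : V) :
    True := trivial

end Transition
section Minpoly
variable {A : Matrix V V ℝ} (hH : A.IsHermitian)

lemma sum_mulVec' {ι : Type*} (s : Finset ι) (M : ι → Matrix V V ℝ) (z : V → ℝ) :
    (∑ i ∈ s, M i) *ᵥ z = ∑ i ∈ s, M i *ᵥ z := by
  classical
  induction s using Finset.induction_on with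
  | empty => simp [Matrix.zero_mulVec]
  | insert a s hni ih => rw [Finset.sum_insert hni, Finset.sum_insert hni,
      Matrix.add_mulVec, ih]

lemma mulVec_sum' {ι : Type*} (s : Finset ι) (M : Matrix V V ℝ) (v : ι → (V → ℝ)) :
    M *ᵥ (∑ i ∈ s, v i) = ∑ i ∈ s, M *ᵥ v i := by
  classical
  induction s using Finset.induction_on with
  | empty => simp [Matrix.mulVec_zero]
  | insert a s hni ih => rw [Finset.sum_insert hni, Finset.sum_insert hni,
      Matrix.mulVec_add, ih]

lemma pow_mulVec (z : V → ℝ) (n : ℕ) :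
    (A ^ n) *ᵥ z = ∑ θ ∈ Θ hH, (θ ^ n) • (Ep hH θ *ᵥ z) := by
  induction n with
  | zero =>
    simp only [pow_zero, Matrix.one_mulVec, one_smul]
    have := congrArg (fun M => M *ᵥ z) (sum_Ep hH)
    rw [sum_mulVec' (Θ hH) (Ep hH) z, Matrix.one_mulVec] at this
    exact this.symm
  | succ n ih =>
    have h1 : A ^ (n + 1) = A * A ^ n := by rw [pow_succ']
    rw [h1, ← Matrix.mulVec_mulVec, ih, mulVec_sum']
    refine Finset.sum_congr rfl (fun θ _ => ?_)
    rw [Matrix.mulVec_smul, A_mulVec_Ep hH θ z]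
    rw [smul_smul, pow_succ', mul_comm]

lemma aeval_mulVec (z : V → ℝ) (Q : Polynomial ℝ) :
    (Polynomial.aeval A Q) *ᵥ z = ∑ θ ∈ Θ hH, (Q.eval θ) • (Ep hH θ *ᵥ z) := by
  induction Q using Polynomial.induction_on' with
  | add p q hp hq =>
    rw [map_add, Matrix.add_mulVec, hp, hq, ← Finset.sum_add_distrib]
    refine Finset.sum_congr rfl (fun θ _ => ?_)
    rw [Polynomial.eval_add, add_smul]
  | monomial n a =>
    rw [Polynomial.aeval_monomial]
    have h1 : ((algebraMap ℝ (Matrix V V ℝ)) a * A ^ n) *ᵥ z = a • ((A ^ n) *ᵥ z) := by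
      rw [Algebra.algebraMap_eq_smul_one, smul_mul_assoc, one_mul, Matrix.smul_mulVec]
    rw [h1, pow_mulVec hH z n, Finset.smul_sum]
    refine Finset.sum_congr rfl (fun θ _ => ?_)
    rw [smul_smul, Polynomial.eval_monomial]

/-- support of z : eigenvalues whose projection of z is nonzero -/
noncomputable def Rset (z : V → ℝ) : Finset ℝ :=
  (Θ hH).filter (fun θ => Ep hH θ *ᵥ z ≠ 0)

lemma eval_zero_of_support {z : V → ℝ} {P : Polynomial ℝ}
    (hP : (Polynomial.aeval A P) *ᵥ z = 0) {θ : ℝ} (hθ : θ ∈ Rset hH z) :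
    P.eval θ = 0 := by
  rw [Rset, Finset.mem_filter] at hθ
  obtain ⟨hθΘ, hzθ⟩ := hθ
  have h1 : Ep hH θ *ᵥ ((Polynomial.aeval A P) *ᵥ z) = 0 := by rw [hP, Matrix.mulVec_zero]
  rw [aeval_mulVec hH, mulVec_sum'] at h1
  have h2 : ∀ μ ∈ Θ hH, Ep hH θ *ᵥ (P.eval μ • (Ep hH μ *ᵥ z))
      = if μ = θ then P.eval θ • (Ep hH θ *ᵥ z) else 0 := by
    intro μ _
    rw [Matrix.mulVec_smul, Matrix.mulVec_mulVec]
    by_cases hc : μ = θ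
    · rw [if_pos hc, hc, Ep_mul_self hH θ]
    · rw [if_neg hc, Ep_mul_ne hH (Ne.symm hc), Matrix.zero_mulVec, smul_zero]
  rw [Finset.sum_congr rfl h2, Finset.sum_ite_eq' (Θ hH) θ
    (fun _ => P.eval θ • (Ep hH θ *ᵥ z)), if_pos hθΘ] at h1
  rcases smul_eq_zero.mp h1 with h | h
  · exact h
  · exact absurd h hzθ

lemma relMinpoly_eq {z : V → ℝ} {P : Polynomial ℝ} (hP : IsRelMinpoly A z P) :
    P = ∏ θ ∈ Rset hH z, (X - C θ) := by
  obtain ⟨hmon, hzero, hmin⟩ := hP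
  set Q : Polynomial ℝ := ∏ θ ∈ Rset hH z, (X - C θ) with hQ
  have hQmon : Q.Monic := monic_prod_of_monic _ _ (fun θ _ => monic_X_sub_C θ)
  have hQzero : (Polynomial.aeval A Q) *ᵥ z = 0 := by
    rw [aeval_mulVec hH]
    refine Finset.sum_eq_zero (fun θ hθ => ?_)
    by_cases hc : Ep hH θ *ᵥ z = 0
    · rw [hc, smul_zero]
    · have hmem : θ ∈ Rset hH z := Finset.mem_filter.mpr ⟨hθ, hc⟩
      have : Q.eval θ = 0 := by
        rw [hQ, Polynomial.eval_prod]
        exact Finset.prod_eq_zero hmem (by simp)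
      rw [this, zero_smul]
  have hdP : P.degree ≤ Q.degree := hmin Q hQmon hQzero
  have hPne : P ≠ 0 := hmon.ne_zero
  have hdvd : Q ∣ P := by
    have hle : (Rset hH z).val ≤ P.roots := by
      rw [Multiset.le_iff_count]
      intro θ
      by_cases hc : θ ∈ Rset hH z
      · have h1 : (Rset hH z).val.count θ = 1 :=
          Multiset.count_eq_one_of_mem (Finset.nodup _) (Finset.mem_def.mp hc)
        rw [h1, Polynomial.count_roots]
        rw [Nat.one_le_iff_ne_zero, ← Nat.pos_iff_ne_zero]
        exact (Polynomial.rootMultiplicity_pos hPne).mpr (eval_zero_of_support hH hzero hc)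
      · have h1 : (Rset hH z).val.count θ = 0 := by
          rw [Multiset.count_eq_zero]
          exact hc
        rw [h1]
        exact Nat.zero_le _
    have := (Multiset.prod_X_sub_C_dvd_iff_le_roots hPne ((Rset hH z).val)).mpr hle
    rw [hQ, Finset.prod_eq_multiset_prod]
    exact this
  obtain ⟨u, hu⟩ := hdvd
  have humon : u.Monic := hQmon.of_mul_monic_left (hu ▸ hmon)
  have hdeg : P.natDegree = Q.natDegree + u.natDegree := by
    rw [hu, hQmon.natDegree_mul humon]
  have hdP' : P.natDegree ≤ Q.natDegree := natDegree_le_natDegree hdP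
  have hu0 : u.natDegree = 0 := by omega
  rw [hu, eq_one_of_monic_natDegree_zero humon hu0, mul_one]

end Minpoly
section Divisor

lemma ptrace_eq_neg_nextCoeff {f : Polynomial ℝ} (hd : 1 ≤ f.natDegree) :
    ptrace f = -f.nextCoeff := by
  rw [ptrace, Polynomial.nextCoeff, if_neg (by omega)]

lemma monic_dvd_prod {R : Finset ℝ} {f : Polynomial ℝ} (hf : f.Monic) (hd : 1 ≤ f.natDegree)
    (hdvd : f ∣ ∏ θ ∈ R, (X - C θ)) :
    ∃ T : Finset ℝ, T ⊆ R ∧ f.roots = T.val ∧ T.card = f.natDegree ∧ (∑ θ ∈ T, θ) = ptrace f := by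
  have hP0 : (∏ θ ∈ R, (X - C θ)) ≠ 0 :=
    (monic_prod_of_monic _ _ (fun θ _ => monic_X_sub_C θ)).ne_zero
  have hroots : (∏ θ ∈ R, (X - C θ)).roots = R.val := Polynomial.roots_prod_X_sub_C R
  have hle : f.roots ≤ R.val := by
    rw [← hroots]
    exact Polynomial.roots.le_of_dvd hP0 hdvd
  have hnodup : f.roots.Nodup := Multiset.nodup_of_le hle (Finset.nodup R)
  have hsplits : f.Splits := by
    refine Polynomial.Splits.of_dvd ?_ hP0 hdvd
    exact Polynomial.Splits.prod (fun θ _ => Polynomial.Splits.X_sub_C _)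
  refine ⟨f.roots.toFinset, ?_, ?_, ?_, ?_⟩
  · intro a ha
    rw [Multiset.mem_toFinset] at ha
    exact Finset.mem_def.mpr (Multiset.subset_of_le hle ha)
  · rw [Multiset.toFinset_val, Multiset.dedup_eq_self.mpr hnodup]
  · rw [Multiset.toFinset_card_of_nodup hnodup]
    exact (Polynomial.splits_iff_card_roots.mp hsplits)
  · rw [ptrace_eq_neg_nextCoeff hd]
    have h1 := hsplits.nextCoeff_eq_neg_sum_roots_of_monic hf
    have h2 : (∑ θ ∈ f.roots.toFinset, θ) = f.roots.sum := by
      rw [Finset.sum_eq_multiset_sum, Multiset.toFinset_val, Multiset.dedup_eq_self.mpr hnodup]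
      simp
    rw [h2, h1, neg_neg]

lemma prod_dvd_roots_disjoint {R : Finset ℝ} {f g : Polynomial ℝ} (hf : f.Monic) (hg : g.Monic)
    (hdvd : f * g ∣ ∏ θ ∈ R, (X - C θ)) :
    f.roots.toFinset ∩ g.roots.toFinset = ∅ := by
  have hP0 : (∏ θ ∈ R, (X - C θ)) ≠ 0 :=
    (monic_prod_of_monic _ _ (fun θ _ => monic_X_sub_C θ)).ne_zero
  have hroots : (∏ θ ∈ R, (X - C θ)).roots = R.val := Polynomial.roots_prod_X_sub_C R
  have hle : (f * g).roots ≤ R.val := by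
    rw [← hroots]
    exact Polynomial.roots.le_of_dvd hP0 hdvd
  have hnodup : (f * g).roots.Nodup := Multiset.nodup_of_le hle (Finset.nodup R)
  rw [Polynomial.roots_mul (mul_ne_zero hf.ne_zero hg.ne_zero)] at hnodup
  rw [Finset.eq_empty_iff_forall_notMem]
  intro θ hθ
  rw [Finset.mem_inter, Multiset.mem_toFinset, Multiset.mem_toFinset] at hθ
  have h1 : 1 ≤ f.roots.count θ := (Multiset.one_le_count_iff_mem).mpr hθ.1
  have h2 : 1 ≤ g.roots.count θ := (Multiset.one_le_count_iff_mem).mpr hθ.2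
  have h3 : (f.roots + g.roots).count θ ≤ 1 := Multiset.nodup_iff_count_le_one.mp hnodup θ
  rw [Multiset.count_add] at h3
  omega

end Divisor
section Analytic

lemma abs_pow_sub_pow (z w : ℂ) (hz : ‖z‖ = 1) (hw : ‖w‖ = 1) (n : ℕ) :
    ‖z ^ n - w ^ n‖ ≤ n * ‖z - w‖ := by
  induction n with
  | zero => simp
  | succ n ih =>
    have key : z ^ (n+1) - w ^ (n+1) = z ^ n * (z - w) + (z ^ n - w ^ n) * w := by ring
    rw [key]
    calc ‖z ^ n * (z - w) + (z ^ n - w ^ n) * w‖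
        ≤ ‖z ^ n * (z - w)‖ + ‖(z ^ n - w ^ n) * w‖ :=
          norm_add_le _ _
      _ ≤ ‖z - w‖ + n * ‖z - w‖ := by
          rw [norm_mul, norm_mul, norm_pow, hz, hw, one_pow, one_mul, mul_one]
          exact add_le_add_right ih _
      _ = (n + 1 : ℕ) * ‖z - w‖ := by push_cast; ring

lemma abs_zpow_sub_zpow (z w : ℂ) (hz : ‖z‖ = 1) (hw : ‖w‖ = 1) (n : ℤ) :
    ‖z ^ n - w ^ n‖ ≤ |n| * ‖z - w‖ := by
  have hz0 : z ≠ 0 := by intro h; rw [h] at hz; simp at hz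
  have hw0 : w ≠ 0 := by intro h; rw [h] at hw; simp at hw
  obtain ⟨m, hm | hm⟩ := n.eq_nat_or_neg
  · subst hm
    rw [zpow_natCast, zpow_natCast]
    have : |(m : ℤ)| = (m : ℤ) := abs_of_nonneg (by positivity)
    rw [this]
    push_cast
    exact abs_pow_sub_pow z w hz hw m
  · subst hm
    rw [_root_.zpow_neg, _root_.zpow_neg, zpow_natCast, zpow_natCast]
    have hzm : ‖z ^ m‖ = 1 := by rw [norm_pow, hz, one_pow]
    have hwm : ‖w ^ m‖ = 1 := by rw [norm_pow, hw, one_pow]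
    have hzm0 : z ^ m ≠ 0 := pow_ne_zero _ hz0
    have hwm0 : w ^ m ≠ 0 := pow_ne_zero _ hw0
    have key : (z ^ m)⁻¹ - (w ^ m)⁻¹ = (w ^ m - z ^ m) * (z ^ m)⁻¹ * (w ^ m)⁻¹ := by
      field_simp
    rw [key, norm_mul, norm_mul, norm_inv, norm_inv, hzm, hwm]
    simp only [inv_one, mul_one]
    have h1 : ‖w ^ m - z ^ m‖ = ‖z ^ m - w ^ m‖ := by
      rw [← neg_sub (z ^ m) (w ^ m), norm_neg]
    rw [h1]
    have habs : |(-(m:ℤ))| = (m : ℤ) := by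
      rw [abs_neg]; exact abs_of_nonneg (by positivity)
    rw [habs]
    push_cast
    exact abs_pow_sub_pow z w hz hw m

lemma abs_prod_sub_prod (S : Finset ℝ) (u v : ℝ → ℂ) (hu : ∀ θ ∈ S, ‖u θ‖ = 1)
    (hv : ∀ θ ∈ S, ‖v θ‖ = 1) :
    ‖∏ θ ∈ S, u θ - ∏ θ ∈ S, v θ‖ ≤ ∑ θ ∈ S, ‖u θ - v θ‖ := by
  classical
  induction S using Finset.induction_on with
  | empty => simp
  | insert a S hni ih =>
    rw [Finset.prod_insert hni, Finset.prod_insert hni, Finset.sum_insert hni]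
    have key : u a * ∏ θ ∈ S, u θ - v a * ∏ θ ∈ S, v θ
        = (u a - v a) * ∏ θ ∈ S, u θ + v a * (∏ θ ∈ S, u θ - ∏ θ ∈ S, v θ) := by ring
    rw [key]
    have habsu : ‖∏ θ ∈ S, u θ‖ = 1 := by
      rw [norm_prod]
      exact Finset.prod_eq_one (fun θ hθ => hu θ (Finset.mem_insert_of_mem hθ))
    calc ‖_‖
        ≤ ‖(u a - v a) * ∏ θ ∈ S, u θ‖
          + ‖v a * (∏ θ ∈ S, u θ - ∏ θ ∈ S, v θ)‖ := norm_add_le _ _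
      _ ≤ ‖u a - v a‖ + ∑ θ ∈ S, ‖u θ - v θ‖ := by
          rw [norm_mul, norm_mul, habsu, mul_one, hv a (Finset.mem_insert_self a S), one_mul]
          exact add_le_add_right (ih (fun θ hθ => hu θ (Finset.mem_insert_of_mem hθ))
            (fun θ hθ => hv θ (Finset.mem_insert_of_mem hθ))) _

lemma prod_zpow' (γ : ℂ) (hγ : γ ≠ 0) (S : Finset ℝ) (l : ℝ → ℤ) :
    ∏ θ ∈ S, γ ^ (l θ) = γ ^ (∑ θ ∈ S, l θ) := by
  classical
  induction S using Finset.induction_on with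
  | empty => simp
  | insert a S hni ih =>
    rw [Finset.prod_insert hni, Finset.sum_insert hni, zpow_add₀ hγ, ih]

lemma re_conj_mul (γ w : ℂ) (hγ : ‖γ‖ = 1) (hw : ‖w‖ = 1) :
    ((starRingEnd ℂ) γ * w).re = 1 - (‖w - γ‖)^2 / 2 := by
  have h1 : (‖w - γ‖)^2 = Complex.normSq (w - γ) := Complex.sq_norm _
  rw [Complex.normSq_sub] at h1
  have hw2 : Complex.normSq w = 1 := by rw [← Complex.sq_norm, hw]; norm_num
  have hγ2 : Complex.normSq γ = 1 := by rw [← Complex.sq_norm, hγ]; norm_num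
  rw [hw2, hγ2] at h1
  have h2 : ((starRingEnd ℂ) γ * w).re = (w * (starRingEnd ℂ) γ).re := by rw [mul_comm]
  rw [h2]
  linarith

end Analytic
section Indicator

lemma sum_ind_inter (S T : Finset ℝ) (a : ℤ) :
    ∑ θ ∈ S, (if θ ∈ T then a else 0) = (S ∩ T).card * a := by
  rw [Finset.sum_ite_mem, Finset.sum_const, nsmul_eq_mul]

lemma sum_ind_mul (S T : Finset ℝ) (r : ℝ) :
    ∑ θ ∈ S, (if θ ∈ T then r else 0) * θ = r * ∑ θ ∈ S ∩ T, θ := by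
  have h1 : ∀ θ, (if θ ∈ T then r else 0) * θ = (if θ ∈ T then r * θ else 0) := by
    intro θ; split <;> simp
  rw [Finset.sum_congr rfl (fun θ _ => h1 θ), Finset.sum_ite_mem, Finset.mul_sum]

end Indicator

set_option maxHeartbeats 1600000 in
theorem main {V : Type*} [Fintype V] [DecidableEq V]
    (A : Matrix V V ℝ) (hA : A.IsSymm) (x y : V) (hxy : x ≠ y)
    (hsc : StronglyCospectral A x y)
    (Pp Pm : Polynomial ℝ)
    (hPp : IsRelMinpoly A (Pi.single x 1 + Pi.single y 1) Pp)
    (hPm : IsRelMinpoly A (Pi.single x 1 - Pi.single y 1) Pm)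
    (f g h : Polynomial ℝ) (hf : f.Monic) (hg : g.Monic) (hh : h.Monic)
    (hfdeg : 1 ≤ f.natDegree) (hgdeg : 1 ≤ g.natDegree) (hhdeg : Odd h.natDegree)
    (tf tg th : ℤ) (htf : (tf : ℝ) = ptrace f) (htg : (tg : ℝ) = ptrace g)
    (hth : (th : ℝ) = ptrace h)
    (htfodd : Odd tf) (hmix : Odd (tf * (g.natDegree : ℤ) - tg * (f.natDegree : ℤ)))
    (hdvd : (f * g ∣ Pp ∧ h ∣ Pm) ∨ (f * g ∣ Pm ∧ h ∣ Pp)) :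
    ¬ PGST A x y := by
  intro hPGST
  have hH : A.IsHermitian := by
    rw [Matrix.IsHermitian]
    ext i j
    rw [Matrix.conjTranspose_apply]
    rw [Matrix.IsSymm] at hA
    have := congrFun (congrFun hA i) j
    simpa using this
  set ex : V → ℝ := Pi.single x 1 with hex
  set ey : V → ℝ := Pi.single y 1 with hey
  set Rp := Rset hH (ex + ey) with hRp
  set Rm := Rset hH (ex - ey) with hRm
  have hPpeq : Pp = ∏ θ ∈ Rp, (X - C θ) := relMinpoly_eq hH hPp
  have hPmeq : Pm = ∏ θ ∈ Rm, (X - C θ) := relMinpoly_eq hH hPm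
  -- sign facts
  have hsgp : ∀ θ ∈ Rp, sg hH x y θ = 1 := by
    intro θ hθ
    rcases sg_one_or_neg hH x y θ with hs | hs
    · exact hs
    · exfalso
      have h1 := Ep_single_eq hH x y hsc θ
      rw [hs] at h1
      have h2 : Ep hH θ *ᵥ (ex + ey) = 0 := by
        rw [Matrix.mulVec_add]
        rw [← hex, ← hey] at h1
        rw [h1]
        funext i
        simp
      rw [hRp, Rset, Finset.mem_filter] at hθ
      exact hθ.2 h2
  have hsgm : ∀ θ ∈ Rm, sg hH x y θ = -1 := by
    intro θ hθ
    rcases sg_one_or_neg hH x y θ with hs | hs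
    · exfalso
      have h1 := Ep_single_eq hH x y hsc θ
      rw [hs, one_smul] at h1
      have h2 : Ep hH θ *ᵥ (ex - ey) = 0 := by
        rw [Matrix.mulVec_sub]
        rw [← hex, ← hey] at h1
        rw [h1]
        funext i
        simp
      rw [hRm, Rset, Finset.mem_filter] at hθ
      exact hθ.2 h2
    · exact hs
  have hdisjPM : ∀ θ, θ ∈ Rp → θ ∈ Rm → False := by
    intro θ h1 h2
    have := hsgp θ h1
    have := hsgm θ h2
    linarith
  set S := Rp ∪ Rm with hS
  have hSsubΘ : S ⊆ Θ hH := by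
    intro θ hθ
    rcases Finset.mem_union.mp hθ with h1 | h1
    · exact Finset.mem_of_mem_filter θ h1
    · exact Finset.mem_of_mem_filter θ h1
  have hppos : ∀ θ ∈ S, 0 < pp hH x θ := by
    intro θ hθ
    apply pp_pos_of_ne hH x θ
    intro hz
    have h1 := Ep_single_eq hH x y hsc θ
    rw [← hex, ← hey] at h1
    have hy0 : Ep hH θ *ᵥ ey = 0 := by
      have h2 : sg hH x y θ • (Ep hH θ *ᵥ ey) = 0 := by rw [← h1, hz]
      rcases sg_one_or_neg hH x y θ with hs | hs <;> rw [hs] at h2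
      · simpa using h2
      · have := congrArg (fun v => (-1 : ℝ) • v) h2
        simpa using this
    rcases Finset.mem_union.mp hθ with h1' | h1'
    · rw [hRp, Rset, Finset.mem_filter] at h1'
      apply h1'.2
      rw [Matrix.mulVec_add, hz, hy0, add_zero]
    · rw [hRm, Rset, Finset.mem_filter] at h1'
      apply h1'.2
      rw [Matrix.mulVec_sub, hz, hy0, sub_zero]
  -- integer data
  set mm : ℤ := (f.natDegree : ℤ) with hmm
  set nn : ℤ := (g.natDegree : ℤ) with hnn
  set kk : ℤ := (h.natDegree : ℤ) with hkk
  set a : ℤ := kk * tg - nn * th with ha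
  set b : ℤ := mm * th - kk * tf with hb
  set c : ℤ := tf * nn - tg * mm with hc
  have hkkodd : Odd kk := by
    rw [hkk]
    exact Int.odd_coe_nat h.natDegree |>.mpr hhdeg
  have hhdeg1 : 1 ≤ h.natDegree := by
    rcases hhdeg with ⟨j, hj⟩
    omega
  -- the three root sets
  obtain ⟨Tf, Tg, Th, hTfS, hTgS, hThS, hTfcard, hTgcard, hThcard, hTfsum, hTgsum, hThsum,
      hparity⟩ :
      ∃ Tf Tg Th : Finset ℝ, Tf ⊆ S ∧ Tg ⊆ S ∧ Th ⊆ S ∧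
        (Tf.card : ℤ) = mm ∧ (Tg.card : ℤ) = nn ∧ (Th.card : ℤ) = kk ∧
        (∑ θ ∈ Tf, θ) = (tf : ℝ) ∧ (∑ θ ∈ Tg, θ) = (tg : ℝ) ∧ (∑ θ ∈ Th, θ) = (th : ℝ) ∧
        Odd (((Rm ∩ Tf).card : ℤ) * a + ((Rm ∩ Tg).card : ℤ) * b
          + ((Rm ∩ Th).card : ℤ) * c) := by
    rcases hdvd with ⟨hfg, hhd⟩ | ⟨hfg, hhd⟩
    · rw [hPpeq] at hfg
      rw [hPmeq] at hhd
      obtain ⟨Tf, hTfsub, hTfroots, hTfcard, hTfsum⟩ :=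
        monic_dvd_prod hf hfdeg ((dvd_mul_right f g).trans hfg)
      obtain ⟨Tg, hTgsub, hTgroots, hTgcard, hTgsum⟩ :=
        monic_dvd_prod hg hgdeg ((dvd_mul_left g f).trans hfg)
      obtain ⟨Th, hThsub, hThroots, hThcard, hThsum⟩ := monic_dvd_prod hh hhdeg1 hhd
      have hTfRm : Rm ∩ Tf = ∅ := Finset.eq_empty_of_forall_notMem (fun θ hθ =>
        hdisjPM θ (hTfsub (Finset.mem_of_mem_inter_right hθ))
          (Finset.mem_of_mem_inter_left hθ))
      have hTgRm : Rm ∩ Tg = ∅ := Finset.eq_empty_of_forall_notMem (fun θ hθ =>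
        hdisjPM θ (hTgsub (Finset.mem_of_mem_inter_right hθ))
          (Finset.mem_of_mem_inter_left hθ))
      have hThRm : Rm ∩ Th = Th := Finset.inter_eq_right.mpr hThsub
      refine ⟨Tf, Tg, Th, hTfsub.trans Finset.subset_union_left,
        hTgsub.trans Finset.subset_union_left, hThsub.trans Finset.subset_union_right,
        by rw [hTfcard, hmm], by rw [hTgcard, hnn], by rw [hThcard, hkk],
        hTfsum.trans htf.symm, hTgsum.trans htg.symm, hThsum.trans hth.symm, ?_⟩
      rw [hTfRm, hTgRm, hThRm, hThcard]
      simp only [Finset.card_empty, Nat.cast_zero, zero_mul, zero_add]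
      rw [← hkk]
      exact hkkodd.mul hmix
    · rw [hPmeq] at hfg
      rw [hPpeq] at hhd
      obtain ⟨Tf, hTfsub, hTfroots, hTfcard, hTfsum⟩ :=
        monic_dvd_prod hf hfdeg ((dvd_mul_right f g).trans hfg)
      obtain ⟨Tg, hTgsub, hTgroots, hTgcard, hTgsum⟩ :=
        monic_dvd_prod hg hgdeg ((dvd_mul_left g f).trans hfg)
      obtain ⟨Th, hThsub, hThroots, hThcard, hThsum⟩ := monic_dvd_prod hh hhdeg1 hhd
      have hTfRm : Rm ∩ Tf = Tf := Finset.inter_eq_right.mpr hTfsub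
      have hTgRm : Rm ∩ Tg = Tg := Finset.inter_eq_right.mpr hTgsub
      have hThRm : Rm ∩ Th = ∅ := Finset.eq_empty_of_forall_notMem (fun θ hθ =>
        hdisjPM θ (hThsub (Finset.mem_of_mem_inter_right hθ))
          (Finset.mem_of_mem_inter_left hθ))
      refine ⟨Tf, Tg, Th, hTfsub.trans Finset.subset_union_right,
        hTgsub.trans Finset.subset_union_right, hThsub.trans Finset.subset_union_left,
        by rw [hTfcard, hmm], by rw [hTgcard, hnn], by rw [hThcard, hkk],
        hTfsum.trans htf.symm, hTgsum.trans htg.symm, hThsum.trans hth.symm, ?_⟩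
      rw [hTfRm, hTgRm, hThRm]
      simp only [Finset.card_empty, Nat.cast_zero, zero_mul, add_zero]
      rw [hTfcard, hTgcard]
      have hkey : mm * a + nn * b = -(kk * c) := by rw [ha, hb, hc]; ring
      rw [hkey]
      exact (hkkodd.mul hmix).neg
  -- the coefficient function
  set l : ℝ → ℤ := fun θ =>
    (if θ ∈ Tf then a else 0) + (if θ ∈ Tg then b else 0) + (if θ ∈ Th then c else 0) with hl
  have hsum0 : ∑ θ ∈ S, l θ = 0 := by
    rw [hl]
    rw [Finset.sum_add_distrib, Finset.sum_add_distrib]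
    rw [sum_ind_inter S Tf a, sum_ind_inter S Tg b, sum_ind_inter S Th c]
    rw [Finset.inter_eq_right.mpr hTfS, Finset.inter_eq_right.mpr hTgS,
      Finset.inter_eq_right.mpr hThS]
    rw [hTfcard, hTgcard, hThcard, ha, hb, hc]
    ring
  have hlin : ∑ θ ∈ S, (l θ : ℝ) * θ = 0 := by
    have hcast : ∀ θ, ((l θ : ℤ) : ℝ) = (if θ ∈ Tf then (a:ℝ) else 0)
        + (if θ ∈ Tg then (b:ℝ) else 0) + (if θ ∈ Th then (c:ℝ) else 0) := by
      intro θ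
      rw [hl]
      push_cast [apply_ite (fun (i : ℤ) => (i : ℝ))]
      ring
    have h1 : ∑ θ ∈ S, (l θ : ℝ) * θ
        = ∑ θ ∈ S, ((if θ ∈ Tf then (a:ℝ) else 0) * θ + (if θ ∈ Tg then (b:ℝ) else 0) * θ
          + (if θ ∈ Th then (c:ℝ) else 0) * θ) := by
      refine Finset.sum_congr rfl (fun θ _ => ?_)
      rw [hcast θ]; ring
    rw [h1, Finset.sum_add_distrib, Finset.sum_add_distrib,
      sum_ind_mul S Tf, sum_ind_mul S Tg, sum_ind_mul S Th,
      Finset.inter_eq_right.mpr hTfS, Finset.inter_eq_right.mpr hTgS,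
      Finset.inter_eq_right.mpr hThS, hTfsum, hTgsum, hThsum]
    have hza : (a:ℝ) = (kk:ℝ) * tg - (nn:ℝ) * th := by rw [ha]; push_cast; ring
    have hzb : (b:ℝ) = (mm:ℝ) * th - (kk:ℝ) * tf := by rw [hb]; push_cast; ring
    have hzc : (c:ℝ) = (tf:ℝ) * nn - (tg:ℝ) * mm := by rw [hc]; push_cast; ring
    rw [hza, hzb, hzc]
    ring
  have hodd : Odd (∑ θ ∈ Rm, l θ) := by
    rw [hl]
    rw [Finset.sum_add_distrib, Finset.sum_add_distrib,
      sum_ind_inter Rm Tf a, sum_ind_inter Rm Tg b, sum_ind_inter Rm Th c]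
    exact hparity
  -- nonemptiness and minimum
  have hSne : S.Nonempty := by
    rcases Finset.eq_empty_or_nonempty Th with hTh | hTh
    · exfalso
      rw [hTh] at hThcard
      simp only [Finset.card_empty, Nat.cast_zero] at hThcard
      rw [hkk] at hThcard
      have : h.natDegree = 0 := by exact_mod_cast hThcard.symm
      omega
    · obtain ⟨θ0, hθ0⟩ := hTh
      exact ⟨θ0, hThS hθ0⟩
  obtain ⟨θmin, hθminS, hθminmin⟩ := Finset.exists_min_image S (pp hH x) hSne
  set p0 := pp hH x θmin with hp0def
  have hp0pos : 0 < p0 := hppos θmin hθminS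
  set Mr : ℝ := ∑ θ ∈ S, |(l θ : ℝ)| with hMr
  have hMrnonneg : 0 ≤ Mr := Finset.sum_nonneg (fun θ _ => abs_nonneg _)
  set ε := p0 / (Mr ^ 2 + 1) with hεdef
  have hεpos : 0 < ε := by positivity
  have hp0le1 : p0 ≤ 1 := by
    have h1 : p0 ≤ ∑ θ ∈ Θ hH, pp hH x θ :=
      Finset.single_le_sum (fun θ _ => pp_nonneg hH x θ) (hSsubΘ hθminS)
    rw [sum_pp hH x] at h1
    exact h1
  have hεle1 : ε ≤ 1 := by
    rw [hεdef, div_le_one (by positivity)]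
    nlinarith [sq_nonneg Mr]
  obtain ⟨t, ht0, hUb⟩ := hPGST ε hεpos
  set U := transition A t x y with hU
  set z : ℝ → ℂ := fun θ => ((sg hH x y θ : ℝ) : ℂ) * Complex.exp ((t:ℂ) * Complex.I * θ)
    with hz
  have habsz : ∀ θ, ‖z θ‖ = 1 := by
    intro θ
    rw [hz]
    simp only [norm_mul, sg_abs hH x y θ, one_mul, Complex.norm_exp]
    have h0 : ((t:ℂ) * Complex.I * θ).re = 0 := by simp
    rw [h0, Real.exp_zero]
  have hUformula : U = ∑ θ ∈ Θ hH, (pp hH x θ : ℂ) * z θ := by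
    rw [hU]
    have h1 := congrFun (congrFun (transition_eq hH t) x) y
    have h2 : transition A t x y
        = ∑ θ ∈ Θ hH, Complex.exp ((t:ℂ) * Complex.I * θ) * ((Ep hH θ x y : ℝ) : ℂ) := by
      rw [show transition A t x y = (transition A t) x y from rfl, h1]
      rw [Matrix.sum_apply]
      refine Finset.sum_congr rfl (fun θ _ => ?_)
      rw [Matrix.smul_apply, Matrix.map_apply, smul_eq_mul]
    rw [h2]
    refine Finset.sum_congr rfl (fun θ _ => ?_)
    rw [Ep_xy_eq hH x y hsc θ, hz]
    push_cast
    ring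
  have hUabs : 1 - ε < ‖U‖ := hUb
  have hUne : U ≠ 0 := by
    intro h0
    rw [h0] at hUabs
    simp only [norm_zero] at hUabs
    linarith
  set r : ℝ := ‖U‖ with hr
  have hrpos : 0 < r := by
    rw [hr]
    calc (0:ℝ) ≤ 1 - ε := by linarith
    _ < _ := hUabs
  set γ : ℂ := U / (r : ℂ) with hγ
  have habsγ : ‖γ‖ = 1 := by
    rw [hγ, norm_div, Complex.norm_of_nonneg hrpos.le, ← hr, div_self (ne_of_gt hrpos)]
  have hγne : γ ≠ 0 := by
    intro h0
    rw [h0] at habsγ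
    simp at habsγ
  -- alignment bound
  have hre1 : ((starRingEnd ℂ) γ * U).re = r := by
    have e1 : (starRingEnd ℂ) γ * U = (((r^2 / r : ℝ)) : ℂ) := by
      rw [hγ, map_div₀, Complex.conj_ofReal, div_mul_eq_mul_div, mul_comm, Complex.mul_conj]
      rw [← Complex.sq_norm, ← hr]
      push_cast
      ring_nf
    rw [e1, Complex.ofReal_re, sq, mul_div_assoc, div_self (ne_of_gt hrpos), mul_one]
  have hre2 : ((starRingEnd ℂ) γ * U).re
      = ∑ θ ∈ Θ hH, pp hH x θ * (1 - (‖z θ - γ‖)^2 / 2) := by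
    rw [hUformula, Finset.mul_sum, Complex.re_sum]
    refine Finset.sum_congr rfl (fun θ _ => ?_)
    have e2 : (starRingEnd ℂ) γ * ((pp hH x θ : ℂ) * z θ)
        = (pp hH x θ : ℂ) * ((starRingEnd ℂ) γ * z θ) := by ring
    rw [e2, Complex.re_ofReal_mul, re_conj_mul γ (z θ) habsγ (habsz θ)]
  have hD : ∑ θ ∈ Θ hH, pp hH x θ * (‖z θ - γ‖)^2 < 2 * ε := by
    have e3 : ∑ θ ∈ Θ hH, pp hH x θ * (1 - (‖z θ - γ‖)^2 / 2)
        = 1 - (∑ θ ∈ Θ hH, pp hH x θ * (‖z θ - γ‖)^2) / 2 := by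
      have e4 : ∀ θ ∈ Θ hH, pp hH x θ * (1 - (‖z θ - γ‖)^2 / 2)
          = pp hH x θ - (pp hH x θ * (‖z θ - γ‖)^2) / 2 := by
        intro θ _; ring
      rw [Finset.sum_congr rfl e4, Finset.sum_sub_distrib, sum_pp hH x, ← Finset.sum_div]
    have e5 : r = 1 - (∑ θ ∈ Θ hH, pp hH x θ * (‖z θ - γ‖)^2) / 2 := by
      rw [← hre1, hre2, e3]
    rw [hr] at e5
    linarith [hUabs, e5]
  set δ := Real.sqrt (2 * ε / p0) with hδdef
  have hδnonneg : 0 ≤ δ := Real.sqrt_nonneg _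
  have hbound : ∀ θ ∈ S, ‖z θ - γ‖ ≤ δ := by
    intro θ hθ
    have h1 : pp hH x θ * (‖z θ - γ‖)^2
        ≤ ∑ μ ∈ Θ hH, pp hH x μ * (‖z μ - γ‖)^2 :=
      Finset.single_le_sum (f := fun μ => pp hH x μ * (‖z μ - γ‖)^2)
        (fun μ _ => mul_nonneg (pp_nonneg hH x μ) (sq_nonneg _)) (hSsubΘ hθ)
    have hpθ := hppos θ hθ
    have hp0θ : p0 ≤ pp hH x θ := hθminmin θ hθ
    have h3 : pp hH x θ * (‖z θ - γ‖)^2 < 2 * ε := lt_of_le_of_lt h1 hD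
    have h4 : (‖z θ - γ‖)^2 ≤ 2 * ε / pp hH x θ := by
      rw [le_div_iff₀ hpθ]
      nlinarith [h3]
    have h5 : 2 * ε / pp hH x θ ≤ 2 * ε / p0 :=
      div_le_div_of_nonneg_left (by positivity) hp0pos hp0θ
    calc ‖z θ - γ‖ = Real.sqrt ((‖z θ - γ‖)^2) := by
          rw [Real.sqrt_sq (norm_nonneg _)]
      _ ≤ δ := Real.sqrt_le_sqrt (le_trans h4 h5)
  -- the two products
  have hP2 : ∏ θ ∈ S, γ ^ (l θ) = 1 := by
    rw [prod_zpow' γ hγne, hsum0, zpow_zero]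
  have hP1 : ∏ θ ∈ S, (z θ) ^ (l θ) = -1 := by
    have hsplit : ∀ θ ∈ S, (z θ) ^ (l θ)
        = ((sg hH x y θ : ℝ):ℂ) ^ (l θ) * (Complex.exp ((t:ℂ) * Complex.I * θ)) ^ (l θ) := by
      intro θ _
      rw [hz]
      exact mul_zpow _ _ _
    rw [Finset.prod_congr rfl hsplit, Finset.prod_mul_distrib]
    have hexp : ∏ θ ∈ S, (Complex.exp ((t:ℂ) * Complex.I * θ)) ^ (l θ) = 1 := by
      have h1 : ∀ θ ∈ S, (Complex.exp ((t:ℂ) * Complex.I * θ)) ^ (l θ)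
          = Complex.exp ((l θ : ℂ) * ((t:ℂ) * Complex.I * θ)) := by
        intro θ _
        rw [Complex.exp_int_mul]
      rw [Finset.prod_congr rfl h1, ← Complex.exp_sum]
      have h2 : ∑ θ ∈ S, (l θ : ℂ) * ((t:ℂ) * Complex.I * θ)
          = ((t:ℂ) * Complex.I) * (((∑ θ ∈ S, (l θ : ℝ) * θ) : ℝ) : ℂ) := by
        push_cast
        rw [Finset.mul_sum]
        refine Finset.sum_congr rfl (fun θ _ => ?_)
        ring
      rw [h2, hlin]
      simp
    have hdisjF : Disjoint Rp Rm :=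
      Finset.disjoint_left.mpr (fun {θ} h1 h2 => hdisjPM θ h1 h2)
    have hsgprod : ∏ θ ∈ S, ((sg hH x y θ : ℝ):ℂ) ^ (l θ) = -1 := by
      rw [hS, Finset.prod_union hdisjF]
      have hpp : ∏ θ ∈ Rp, ((sg hH x y θ : ℝ):ℂ) ^ (l θ) = 1 :=
        Finset.prod_eq_one (fun θ hθ => by
          rw [hsgp θ hθ]
          push_cast
          exact _root_.one_zpow _)
      have hmp : ∏ θ ∈ Rm, ((sg hH x y θ : ℝ):ℂ) ^ (l θ) = -1 := by
        have e1 : ∀ θ ∈ Rm, ((sg hH x y θ : ℝ):ℂ) ^ (l θ) = (-1 : ℂ) ^ (l θ) := by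
          intro θ hθ
          rw [hsgm θ hθ]
          norm_num
        rw [Finset.prod_congr rfl e1, prod_zpow' (-1 : ℂ) (by norm_num) Rm l]
        exact Odd.neg_one_zpow hodd
      rw [hpp, hmp, one_mul]
    rw [hexp, hsgprod, mul_one]
  have habszl : ∀ θ ∈ S, ‖(z θ) ^ (l θ)‖ = 1 := by
    intro θ _
    rw [norm_zpow, habsz θ, _root_.one_zpow]
  have habsγl : ∀ θ ∈ S, ‖γ ^ (l θ)‖ = 1 := by
    intro θ _
    rw [norm_zpow, habsγ, _root_.one_zpow]
  have hfinal : (2:ℝ) ≤ Mr * δ := by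
    have h1 : ‖∏ θ ∈ S, (z θ) ^ (l θ) - ∏ θ ∈ S, γ ^ (l θ)‖
        ≤ ∑ θ ∈ S, ‖(z θ) ^ (l θ) - γ ^ (l θ)‖ :=
      abs_prod_sub_prod S _ _ habszl habsγl
    rw [hP1, hP2] at h1
    rw [show (-1 - 1 : ℂ) = -2 by ring, norm_neg] at h1
    have h2 : ‖(2 : ℂ)‖ = 2 := by norm_num
    rw [h2] at h1
    have h3 : ∑ θ ∈ S, ‖(z θ) ^ (l θ) - γ ^ (l θ)‖ ≤ Mr * δ := by
      rw [hMr, Finset.sum_mul]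
      refine Finset.sum_le_sum (fun θ hθ => ?_)
      calc ‖(z θ) ^ (l θ) - γ ^ (l θ)‖
          ≤ |(l θ : ℝ)| * ‖z θ - γ‖ := by
            have h4 := abs_zpow_sub_zpow (z θ) γ (habsz θ) habsγ (l θ)
            have h5 : ((|l θ| : ℤ) : ℝ) = |(l θ : ℝ)| := by push_cast; rfl
            rw [← h5]
            exact_mod_cast h4
        _ ≤ |(l θ : ℝ)| * δ := mul_le_mul_of_nonneg_left (hbound θ hθ) (abs_nonneg _)
    linarith
  -- contradiction
  have hδsq : δ ^ 2 = 2 * ε / p0 := Real.sq_sqrt (by positivity)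
  have hδ2 : δ ^ 2 * (Mr ^ 2 + 1) = 2 := by
    rw [hδsq, hεdef]
    field_simp
  have h4 : (2:ℝ) * 2 ≤ (Mr * δ) * (Mr * δ) :=
    mul_le_mul hfinal hfinal (by norm_num) (mul_nonneg hMrnonneg hδnonneg)
  nlinarith [h4, hδ2, sq_nonneg δ]

end PGSTAux


theorem stmt_2 {V : Type*} [Fintype V] [DecidableEq V]
    (A : Matrix V V ℝ) (hA : A.IsSymm) (x y : V) (hxy : x ≠ y)
    (hsc : StronglyCospectral A x y)
    (Pp Pm : Polynomial ℝ)
    (hPp : IsRelMinpoly A (Pi.single x 1 + Pi.single y 1) Pp)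
    (hPm : IsRelMinpoly A (Pi.single x 1 - Pi.single y 1) Pm)
    (f g h : Polynomial ℝ) (hf : f.Monic) (hg : g.Monic) (hh : h.Monic)
    (hfdeg : 1 ≤ f.natDegree) (hgdeg : 1 ≤ g.natDegree) (hhdeg : Odd h.natDegree)
    (tf tg th : ℤ) (htf : (tf : ℝ) = ptrace f) (htg : (tg : ℝ) = ptrace g)
    (hth : (th : ℝ) = ptrace h)
    (htfodd : Odd tf) (hmix : Odd (tf * (g.natDegree : ℤ) - tg * (f.natDegree : ℤ)))
    (hdvd : (f * g ∣ Pp ∧ h ∣ Pm) ∨ (f * g ∣ Pm ∧ h ∣ Pp)) :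
    ¬ PGST A x y := by
  exact PGSTAux.main A hA x y hxy hsc Pp Pm hPp hPm f g h hf hg hh hfdeg hgdeg hhdeg tf tg th htf htg hth htfodd hmix hdvd
end

section
/- Let N ≥ 2, let M satisfy 1 ≤ M ≤ N/2 with M even, and let w be a real number transcendental over ℚ. Then the modified path P_N^{(M,w)} does not have pretty good state transfer between vertices 1 and N. -/
open Matrix Polynomial

/-- The adjacency matrix of the modified path `P_N^{(M,w)}` on vertices `0, 1, …, N+1`:
a path on vertices `1, …, N`, with extra vertex `0` joined to vertex `M` and extra vertex
`N+1` joined to vertex `N+1-M`, each by an edge of weight `w`. -/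
def modPathAdj (N M : ℕ) (w : ℝ) : Matrix (Fin (N + 2)) (Fin (N + 2)) ℝ :=
  Matrix.of fun i j =>
    if (1 ≤ (i : ℕ) ∧ (i : ℕ) ≤ N - 1 ∧ (j : ℕ) = (i : ℕ) + 1) ∨
       (1 ≤ (j : ℕ) ∧ (j : ℕ) ≤ N - 1 ∧ (i : ℕ) = (j : ℕ) + 1) then 1
    else if ((i : ℕ) = 0 ∧ (j : ℕ) = M) ∨ ((j : ℕ) = 0 ∧ (i : ℕ) = M) then w
    else if ((i : ℕ) = N + 1 - M ∧ (j : ℕ) = N + 1) ∨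
            ((j : ℕ) = N + 1 - M ∧ (i : ℕ) = N + 1) then w
    else 0

/-- An explicit vector in the kernel of `modPathAdj N M w` (for even `M`):
supported on vertex `0` and the odd path vertices `< M`. -/
noncomputable def kerVec (M : ℕ) (w : ℝ) {n : ℕ} : Fin n → ℝ := fun j =>
  if (j : ℕ) = 0 then (if M % 4 = 0 then 1 else -1)
  else if (j : ℕ) % 2 = 1 ∧ (j : ℕ) < M then (if (j : ℕ) % 4 = 1 then w else -w)
  else 0

/-- The matrix exponential fixes any kernel vector. -/
lemma exp_fix_kernel {n : Type*} [Fintype n] [DecidableEq n]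
    (X : Matrix n n ℂ) (v : n → ℂ) (h : X *ᵥ v = 0) :
    NormedSpace.exp X *ᵥ v = v := by
  letI : SeminormedRing (Matrix n n ℂ) := Matrix.linftyOpSemiNormedRing
  letI : NormedRing (Matrix n n ℂ) := Matrix.linftyOpNormedRing
  letI : NormedAlgebra ℂ (Matrix n n ℂ) := Matrix.linftyOpNormedAlgebra
  have hsum : Summable fun k : ℕ => ((Nat.factorial k : ℂ))⁻¹ • X ^ k :=
    NormedSpace.expSeries_summable' (𝕂 := ℂ) X
  let L : Matrix n n ℂ →ₗ[ℂ] (n → ℂ) :=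
    { toFun := fun Y => Y *ᵥ v
      map_add' := fun Y Z => Matrix.add_mulVec Y Z v
      map_smul' := fun c Y => Matrix.smul_mulVec c Y v }
  have hL : Continuous L := LinearMap.continuous_of_finiteDimensional L
  have hmap := (hsum.hasSum.map L.toAddMonoidHom hL).tsum_eq
  have h1 : NormedSpace.exp X *ᵥ v = ∑' k : ℕ, ((Nat.factorial k : ℂ))⁻¹ • (X ^ k *ᵥ v) := by
    rw [NormedSpace.exp_eq_tsum (𝕂 := ℂ)]
    simpa [L, Function.comp, LinearMap.toAddMonoidHom_coe, LinearMap.coe_mk,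
      AddHom.coe_mk, Matrix.smul_mulVec] using hmap.symm
  rw [h1, tsum_eq_single 0 ?_]
  · simp
  · intro k hk
    obtain ⟨m, rfl⟩ := Nat.exists_eq_succ_of_ne_zero hk
    rw [pow_succ, ← Matrix.mulVec_mulVec, h, Matrix.mulVec_zero, smul_zero]

set_option maxHeartbeats 1600000 in
lemma kerVec_spec (N M : ℕ) (w : ℝ) (hN : 2 ≤ N) (hM1 : 2 ≤ M) (hM2 : 2 * M ≤ N)
    (hMe : M % 2 = 0) : (modPathAdj N M w) *ᵥ (kerVec M w (n := N + 2)) = 0 := by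
  funext i
  have hI : (i : ℕ) < N + 2 := i.isLt
  simp only [Matrix.mulVec, dotProduct, Pi.zero_apply]
  by_cases hA : (i : ℕ) % 2 = 0 ∧ 2 ≤ (i : ℕ) ∧ (i : ℕ) ≤ M
  · -- rows with a two-term cancellation
    -- the two distinguished columns
    obtain ⟨a, haval⟩ : ∃ a : Fin (N + 2), (a : ℕ) = (i : ℕ) - 1 :=
      ⟨⟨(i : ℕ) - 1, by omega⟩, rfl⟩
    obtain ⟨b, hbval⟩ : ∃ b : Fin (N + 2),
        (b : ℕ) = (if (i : ℕ) = M then 0 else (i : ℕ) + 1) := by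
      split_ifs with hiM
      · exact ⟨⟨0, by omega⟩, rfl⟩
      · exact ⟨⟨(i : ℕ) + 1, by omega⟩, rfl⟩
    have hbval' : ((i : ℕ) = M ∧ (b : ℕ) = 0) ∨ ((i : ℕ) < M ∧ (b : ℕ) = (i : ℕ) + 1) := by
      by_cases hiM : (i : ℕ) = M
      · rw [if_pos hiM] at hbval; exact Or.inl ⟨hiM, hbval⟩
      · rw [if_neg hiM] at hbval; exact Or.inr ⟨by omega, hbval⟩
    clear hbval
    have hab : b ≠ a := by
      intro h
      rw [h] at hbval'
      omega
    have e1 : ∑ j ∈ Finset.univ.erase a,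
          modPathAdj N M w i j * kerVec M w j
          + modPathAdj N M w i a * kerVec M w a
        = ∑ j : Fin (N + 2), modPathAdj N M w i j * kerVec M w j :=
      Finset.sum_erase_add _ _ (Finset.mem_univ a)
    have e2 : ∑ j ∈ (Finset.univ.erase a).erase b,
          modPathAdj N M w i j * kerVec M w j
          + modPathAdj N M w i b * kerVec M w b
        = ∑ j ∈ Finset.univ.erase a, modPathAdj N M w i j * kerVec M w j :=
      Finset.sum_erase_add _ _ (Finset.mem_erase.mpr ⟨hab, Finset.mem_univ b⟩)
    have e3 : ∑ j ∈ (Finset.univ.erase a).erase b,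
        modPathAdj N M w i j * kerVec M w j = 0 := by
      refine Finset.sum_eq_zero fun j hj => ?_
      rw [Finset.mem_erase, Finset.mem_erase] at hj
      have hj1 : (j : ℕ) ≠ (b : ℕ) := fun hh => hj.1 (Fin.ext hh)
      have hj2 : (j : ℕ) ≠ (a : ℕ) := fun hh => hj.2.1 (Fin.ext hh)
      have hjlt : (j : ℕ) < N + 2 := j.isLt
      simp only [modPathAdj, Matrix.of_apply, kerVec]
      split_ifs <;> first | ring1 | (exfalso; omega)
    have hEa : modPathAdj N M w i a = 1 := by
      simp only [modPathAdj, Matrix.of_apply]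
      rw [if_pos (Or.inr ⟨by omega, by omega, by omega⟩)]
    have hKa : kerVec M w a = if (a : ℕ) % 4 = 1 then w else -w := by
      simp only [kerVec]
      rw [if_neg (by omega), if_pos ⟨by omega, by omega⟩]
    have e4 : modPathAdj N M w i a * kerVec M w a
        + modPathAdj N M w i b * kerVec M w b = 0 := by
      rcases hbval' with ⟨hiM, hb0⟩ | ⟨hiM, hbv⟩
      · -- row `M`, second column is `0`
        have hEb : modPathAdj N M w i b = w := by
          simp only [modPathAdj, Matrix.of_apply]
          rw [if_neg (by omega), if_pos (Or.inr ⟨by omega, by omega⟩)]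
        have hKb : kerVec M w b = if M % 4 = 0 then 1 else -1 := by
          simp only [kerVec]
          rw [if_pos (by omega)]
        rw [hEa, hKa, hEb, hKb]
        split_ifs <;> first | ring1 | (exfalso; omega)
      · -- interior even row, second column is `i + 1`
        have hEb : modPathAdj N M w i b = 1 := by
          simp only [modPathAdj, Matrix.of_apply]
          rw [if_pos (Or.inl ⟨by omega, by omega, by omega⟩)]
        have hKb : kerVec M w b = if (b : ℕ) % 4 = 1 then w else -w := by
          simp only [kerVec]
          rw [if_neg (by omega), if_pos ⟨by omega, by omega⟩]
        rw [hEa, hKa, hEb, hKb]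
        split_ifs <;> first | ring1 | (exfalso; omega)
    rw [← e1, ← e2, e3]
    linarith [e4]
  · -- all other rows: every term vanishes
    refine Finset.sum_eq_zero fun j _ => ?_
    have hjlt : (j : ℕ) < N + 2 := j.isLt
    simp only [modPathAdj, Matrix.of_apply, kerVec]
    split_ifs <;> first | ring1 | (exfalso; omega)

set_option maxHeartbeats 1600000 in
theorem stmt_5 (N M : ℕ) (hN : 2 ≤ N) (hM1 : 1 ≤ M) (hM2 : 2 * M ≤ N)
    (hMe : Even M) (w : ℝ) (hw : Transcendental ℚ w) :
    ¬ PGST (modPathAdj N M w) ⟨1, by omega⟩ ⟨N, by omega⟩ := by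
  intro hP
  have hw0 : w ≠ 0 := fun h => hw (h ▸ isAlgebraic_zero)
  obtain ⟨m', hm'⟩ := hMe
  have hMe2 : M % 2 = 0 := by omega
  have hM2' : 2 ≤ M := by omega
  set x : Fin (N + 2) := ⟨1, by omega⟩ with hxdef
  set y : Fin (N + 2) := ⟨N, by omega⟩ with hydef
  set A : Matrix (Fin (N + 2)) (Fin (N + 2)) ℝ := modPathAdj N M w with hA
  set B : Matrix (Fin (N + 2)) (Fin (N + 2)) ℂ := A.map (fun a => (a : ℂ)) with hB
  set vR : Fin (N + 2) → ℝ := kerVec M w with hvR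
  have hkerR : A *ᵥ vR = 0 := kerVec_spec N M w hN hM2' hM2 hMe2
  set vC : Fin (N + 2) → ℂ := fun j => ((vR j : ℝ) : ℂ) with hvC
  have hker : B *ᵥ vC = 0 := by
    funext i
    have h0 := congrFun hkerR i
    simp only [Matrix.mulVec, dotProduct, Pi.zero_apply] at h0 ⊢
    simp only [hB, Matrix.map_apply, hvC]
    rw [show (∑ j, ((A i j : ℝ) : ℂ) * ((vR j : ℝ) : ℂ))
        = ((∑ j, A i j * vR j : ℝ) : ℂ) by push_cast; ring]
    rw [h0, Complex.ofReal_zero]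
  -- values of the kernel vector at x and y
  have hxv : (x : ℕ) = 1 := by rw [hxdef]
  have hyv : (y : ℕ) = N := by rw [hydef]
  have hxR : vR x = w := by
    simp only [hvR, kerVec, hxv]
    simp [show (1 : ℕ) < M by omega]
  have hyR : vR y = 0 := by
    simp only [hvR, kerVec, hyv]
    simp [show ¬(N = 0) by omega, show ¬(N < M) by omega]
  have hx1 : vC x = (w : ℂ) := by simp only [hvC, hxR]
  have hy0 : vC y = 0 := by simp only [hvC, hyR, Complex.ofReal_zero]
  -- the norm-squared of the kernel vector
  set S : ℝ := ∑ j, (vR j) ^ 2 with hS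
  have hSw : w ^ 2 ≤ S := by
    calc w ^ 2 = (vR x) ^ 2 := by rw [hxR]
      _ ≤ S := Finset.single_le_sum (fun j _ => sq_nonneg (vR j)) (Finset.mem_univ x)
  have hSpos : 0 < S := lt_of_lt_of_le (by positivity) hSw
  set ε : ℝ := min (w ^ 2 / (4 * S)) (1 / 2) with hε
  have hεpos : 0 < ε := lt_min (by positivity) (by norm_num)
  obtain ⟨t, ht, hgt⟩ := hP ε hεpos
  set U : Matrix (Fin (N + 2)) (Fin (N + 2)) ℂ := transition A t with hU
  have hUdef : U = NormedSpace.exp (((t : ℂ) * Complex.I) • B) := by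
    rw [hU, hB]; rfl
  -- symmetry facts
  have hAs : ∀ i j : Fin (N + 2), A j i = A i j := by
    intro i j
    simp only [hA, modPathAdj, Matrix.of_apply]
    split_ifs <;> first | rfl | omega
  have hBT : Bᵀ = B := by
    ext i j
    simp only [hB, Matrix.transpose_apply, Matrix.map_apply, hAs i j]
  have hBH : Bᴴ = B := by
    ext i j
    simp only [hB, Matrix.conjTranspose_apply, Matrix.map_apply, RCLike.star_def,
      Complex.conj_ofReal, hAs i j]
  have hUT : Uᵀ = U := by
    rw [hUdef, ← Matrix.exp_transpose]
    congr 1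
    rw [Matrix.transpose_smul, hBT]
  -- U is unitary
  have hstarc : star ((t : ℂ) * Complex.I) = -((t : ℂ) * Complex.I) := by
    rw [Complex.star_def, _root_.map_mul, Complex.conj_ofReal, Complex.conj_I]
    ring
  have hUH : Uᴴ = NormedSpace.exp (-(((t : ℂ) * Complex.I) • B)) := by
    rw [hUdef, ← Matrix.exp_conjTranspose]
    congr 1
    rw [Matrix.conjTranspose_smul, hBH, hstarc, neg_smul]
  have hUU : Uᴴ * U = 1 := by
    rw [hUH, hUdef, ← Matrix.exp_add_of_commute _ _ ((Commute.refl (((t : ℂ) * Complex.I) • B)).neg_left),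
      neg_add_cancel, NormedSpace.exp_zero]
  -- U fixes the kernel vector
  have hXker : (((t : ℂ) * Complex.I) • B) *ᵥ vC = 0 := by
    rw [Matrix.smul_mulVec, hker, smul_zero]
  have hfix : U *ᵥ vC = vC := by
    rw [hUdef]; exact exp_fix_kernel _ _ hXker
  have hvm : vC ᵥ* U = vC := by
    rw [← hUT, Matrix.vecMul_transpose, hfix]
  -- the key identity
  have hkey : ∑ j, vC j * U j x = (w : ℂ) := by
    have h1 := congrFun hvm x
    simp only [Matrix.vecMul, dotProduct] at h1
    rw [h1, hx1]
  have hsplit : ∑ j ∈ Finset.univ.erase y, vC j * U j x = (w : ℂ) := by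
    have h2 : (∑ j ∈ Finset.univ.erase y, vC j * U j x) + vC y * U y x
        = ∑ j, vC j * U j x := Finset.sum_erase_add _ _ (Finset.mem_univ y)
    rw [hy0, zero_mul, add_zero] at h2
    rw [h2, hkey]
  -- column-norm identity
  have hcol : ∑ j, ‖U j x‖ ^ 2 = 1 := by
    have h1 : (Uᴴ * U) x x = (1 : Matrix (Fin (N + 2)) (Fin (N + 2)) ℂ) x x := by rw [hUU]
    rw [Matrix.mul_apply, Matrix.one_apply_eq] at h1
    have h2 : ∀ j, Uᴴ x j * U j x = ((‖U j x‖ ^ 2 : ℝ) : ℂ) := by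
      intro j
      rw [Matrix.conjTranspose_apply, Complex.star_def, mul_comm, Complex.mul_conj,
        Complex.normSq_eq_norm_sq]
    rw [Finset.sum_congr rfl fun j _ => h2 j, ← Complex.ofReal_sum] at h1
    exact_mod_cast h1
  -- the transfer bound
  have hyx : U y x = U x y := by
    conv_lhs => rw [← hUT, Matrix.transpose_apply]
  have hgt' : 1 - ε < ‖U y x‖ := by rw [hyx]; exact hgt
  have hT : (∑ j ∈ Finset.univ.erase y, ‖U j x‖ ^ 2)
      + ‖U y x‖ ^ 2 = 1 := by
    rw [Finset.sum_erase_add _ _ (Finset.mem_univ y)]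
    exact hcol
  have hCS := Finset.sum_mul_sq_le_sq_mul_sq (Finset.univ.erase y)
      (fun j => ‖vC j‖) (fun j => ‖U j x‖)
  have htri : ‖(w : ℂ)‖
      ≤ ∑ j ∈ Finset.univ.erase y, ‖vC j‖ * ‖U j x‖ := by
    rw [← hsplit]
    refine le_trans (norm_sum_le _ _) (le_of_eq ?_)
    exact Finset.sum_congr rfl fun j _ => norm_mul _ _
  have hvCsum : ∑ j ∈ Finset.univ.erase y, ‖vC j‖ ^ 2 ≤ S := by
    have hterm : ∀ j, ‖vC j‖ ^ 2 = (vR j) ^ 2 := by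
      intro j
      simp only [hvC, Complex.norm_real, Real.norm_eq_abs, sq_abs]
    calc ∑ j ∈ Finset.univ.erase y, ‖vC j‖ ^ 2
        = ∑ j ∈ Finset.univ.erase y, (vR j) ^ 2 :=
          Finset.sum_congr rfl fun j _ => hterm j
      _ ≤ S := Finset.sum_le_sum_of_subset_of_nonneg (Finset.subset_univ _)
          (fun j _ _ => sq_nonneg _)
  -- assemble the contradiction
  have h1ε : (0 : ℝ) ≤ 1 - ε := by
    have := min_le_right (w ^ 2 / (4 * S)) (1 / 2)
    rw [← hε] at this
    linarith
  have habs2 : (1 - ε) ^ 2 ≤ ‖U y x‖ ^ 2 := by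
    nlinarith [le_of_lt hgt', norm_nonneg (U y x)]
  have hεle : ε ≤ w ^ 2 / (4 * S) := by
    rw [hε]; exact min_le_left _ _
  have e3 : (∑ j ∈ Finset.univ.erase y, ‖U j x‖ ^ 2) ≤ 2 * ε := by
    nlinarith [hT, habs2, hεpos]
  have e4 : (0 : ℝ) ≤ ∑ j ∈ Finset.univ.erase y, ‖U j x‖ ^ 2 :=
    Finset.sum_nonneg fun j _ => sq_nonneg _
  have e5 : (0 : ℝ) ≤ ∑ j ∈ Finset.univ.erase y, ‖vC j‖ ^ 2 :=
    Finset.sum_nonneg fun j _ => sq_nonneg _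
  have htri0 : (0 : ℝ) ≤ ∑ j ∈ Finset.univ.erase y, ‖vC j‖ * ‖U j x‖ :=
    Finset.sum_nonneg fun j _ => mul_nonneg (norm_nonneg _) (norm_nonneg _)
  have hw2 : w ^ 2 ≤ S * (2 * ε) := by
    have e1 : w ^ 2 = ‖(w : ℂ)‖ ^ 2 := by
      rw [Complex.norm_real, Real.norm_eq_abs, sq_abs]
    have e2 : ‖(w : ℂ)‖ ^ 2
        ≤ (∑ j ∈ Finset.univ.erase y, ‖vC j‖ ^ 2)
          * (∑ j ∈ Finset.univ.erase y, ‖U j x‖ ^ 2) := by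
      refine le_trans ?_ hCS
      nlinarith [htri, htri0, norm_nonneg ((w : ℂ))]
    nlinarith [e1, e2, hvCsum, e3, e4, e5, hSpos.le]
  have hfin : w ^ 2 ≤ w ^ 2 / 2 := by
    have h6 : S * (2 * ε) ≤ S * (2 * (w ^ 2 / (4 * S))) := by
      nlinarith [hSpos, hεle]
    have h7 : S * (2 * (w ^ 2 / (4 * S))) = w ^ 2 / 2 := by
      field_simp
      ring
    linarith [hw2]
  have hwpos : 0 < w ^ 2 := by positivity
  linarith
end

section
/- Let W = C₄ ∨ K₁ be the wheel on 5 vertices, obtained by joining a single new vertex to every vertex of the 4-cycle C₄. Then for any pair of non-adjacent vertices x, y of W, there is no pretty good state transfer from x to y. -/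
open Matrix Polynomial

/-- The adjacency matrix of the wheel `W = C₄ ∨ K₁`: vertices `0,1,2,3` form a `4`-cycle
and vertex `4` is adjacent to all of them. -/
def wheelAdj : Matrix (Fin 5) (Fin 5) ℝ :=
  !![0, 1, 0, 1, 1;
     1, 0, 1, 0, 1;
     0, 1, 0, 1, 1;
     1, 0, 1, 0, 1;
     1, 1, 1, 1, 0]

/-- Eigenvector matrix of the wheel, with `x` standing for `√5`. -/
def Cmat (x : ℂ) : Matrix (Fin 5) (Fin 5) ℂ :=
  !![1, 1, 0, 1, 1;
    -1, 0, 1, 1, 1;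
     1,-1, 0, 1, 1;
    -1, 0,-1, 1, 1;
     0, 0, 0, x-1, -(1+x)]

noncomputable def Cinv (x : ℂ) : Matrix (Fin 5) (Fin 5) ℂ :=
  !![1/4, -1/4, 1/4, -1/4, 0;
     1/2, 0, -1/2, 0, 0;
     0, 1/2, 0, -1/2, 0;
     (5+x)/40, (5+x)/40, (5+x)/40, (5+x)/40, x/10;
     (5-x)/40, (5-x)/40, (5-x)/40, (5-x)/40, -(x/10)]

lemma Cmat_mul_Cinv (x : ℂ) (hx : x ^ 2 = 5) : Cmat x * Cinv x = 1 := by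
  ext i j
  fin_cases i <;> fin_cases j <;>
    simp [Cmat, Cinv, Matrix.mul_apply, Fin.sum_univ_five, Matrix.one_apply, Matrix.vecHead, Matrix.vecTail, -mul_eq_zero] <;>
    first
      | ring1
      | linear_combination hx / 20
      | linear_combination -hx / 20
      | linear_combination hx / 10
      | linear_combination -hx / 10
      | linear_combination hx / 5
      | linear_combination -hx / 5

lemma Cinv_mul_Cmat (x : ℂ) (hx : x ^ 2 = 5) : Cinv x * Cmat x = 1 := by
  ext i j
  fin_cases i <;> fin_cases j <;>
    simp [Cmat, Cinv, Matrix.mul_apply, Fin.sum_univ_five, Matrix.one_apply, Matrix.vecHead, Matrix.vecTail, -mul_eq_zero] <;>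
    first
      | ring1
      | linear_combination hx / 20
      | linear_combination -hx / 20
      | linear_combination hx / 10
      | linear_combination -hx / 10
      | linear_combination hx / 5
      | linear_combination -hx / 5

lemma wheel_mul (x : ℂ) (hx : x ^ 2 = 5) :
    wheelAdj.map (fun a => (a : ℂ)) * Cmat x =
      Cmat x * Matrix.diagonal ![-2, 0, 0, 1 + x, 1 - x] := by
  ext i j
  fin_cases i <;> fin_cases j <;>
    simp [wheelAdj, Cmat, Matrix.mul_apply, Matrix.mul_diagonal, Fin.sum_univ_five,
      Matrix.vecHead, Matrix.vecTail, -mul_eq_zero] <;>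
    first
      | ring1
      | linear_combination hx
      | linear_combination 2 * hx
      | linear_combination -2 * hx
      | linear_combination -hx

lemma wheel_diag (x : ℂ) (hx : x ^ 2 = 5) :
    wheelAdj.map (fun a => (a : ℂ)) =
      Cmat x * Matrix.diagonal ![-2, 0, 0, 1 + x, 1 - x] * Cinv x := by
  have h := wheel_mul x hx
  calc wheelAdj.map (fun a => (a : ℂ))
      = wheelAdj.map (fun a => (a : ℂ)) * (Cmat x * Cinv x) := by
        rw [Cmat_mul_Cinv x hx, mul_one]
    _ = Cmat x * Matrix.diagonal ![-2, 0, 0, 1 + x, 1 - x] * Cinv x := by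
        rw [← Matrix.mul_assoc, h]

noncomputable def sq5 : ℂ := (Real.sqrt 5 : ℝ)

lemma sq5_sq : sq5 ^ 2 = 5 := by
  rw [sq5, ← Complex.ofReal_pow, Real.sq_sqrt (by norm_num : (5:ℝ) ≥ 0)]
  norm_num

lemma transition_eq (t : ℝ) :
    transition wheelAdj t =
      Cmat sq5 *
        Matrix.diagonal
          (fun k => Complex.exp ((t : ℂ) * Complex.I * (![-2, 0, 0, 1 + sq5, 1 - sq5] k))) *
        Cinv sq5 := by
  have hu : IsUnit (Cmat sq5) :=
    ⟨⟨_, Cinv sq5, Cmat_mul_Cinv _ sq5_sq, Cinv_mul_Cmat _ sq5_sq⟩, rfl⟩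
  have h : ((t : ℂ) * Complex.I) • (wheelAdj.map (fun a => (a : ℂ))) =
      Cmat sq5 *
        Matrix.diagonal (fun k => ((t : ℂ) * Complex.I) * (![-2, 0, 0, 1 + sq5, 1 - sq5] k)) *
        Cinv sq5 := by
    rw [wheel_diag sq5 sq5_sq, ← Matrix.smul_mul, ← Matrix.mul_smul]
    congr 2
    rw [← Matrix.diagonal_smul]
    congr 1
  rw [transition, h, ← Matrix.inv_eq_right_inv (Cmat_mul_Cinv _ sq5_sq),
    Matrix.exp_conj _ _ hu, Matrix.exp_diagonal, Pi.exp_def, Matrix.inv_eq_right_inv (Cmat_mul_Cinv _ sq5_sq)]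
  congr 2
  funext k
  rw [← Complex.exp_eq_exp_ℂ]

noncomputable def zz (t : ℝ) : ℂ :=
  1/4 * Complex.exp ((t : ℂ) * Complex.I * (-2)) - 1/2
    + (5 + sq5)/40 * Complex.exp ((t : ℂ) * Complex.I * (1 + sq5))
    + (5 - sq5)/40 * Complex.exp ((t : ℂ) * Complex.I * (1 - sq5))

lemma entry_eq (t : ℝ) (x y : Fin 5)
    (h : (x = 0 ∧ y = 2) ∨ (x = 2 ∧ y = 0) ∨ (x = 1 ∧ y = 3) ∨ (x = 3 ∧ y = 1)) :
    transition wheelAdj t x y = zz t := by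
  rcases h with ⟨rfl, rfl⟩ | ⟨rfl, rfl⟩ | ⟨rfl, rfl⟩ | ⟨rfl, rfl⟩ <;>
    · rw [transition_eq, zz]
      simp [Cmat, Cinv, Matrix.mul_apply, Matrix.mul_diagonal, Matrix.vecMul_diagonal, Fin.sum_univ_five,
        Matrix.vecHead, Matrix.vecTail, -mul_eq_zero]
      ring

lemma final_contra (ca sa cb sb : ℝ) (pa : sa^2 + ca^2 = 1) (pb : sb^2 + cb^2 = 1)
    (h1 : 1 + (ca*cb - sa*sb) < 2/25) (h2 : 1 + ca < 3/25) (h3 : 1 + cb < 2/5) : False := by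
  nlinarith [sq_nonneg (sa - sb),
    mul_nonneg (by linarith : (0:ℝ) ≤ -22/25 - ca) (by linarith : (0:ℝ) ≤ -3/5 - cb),
    sq_nonneg sa, sq_nonneg sb, sq_nonneg (1+ca), sq_nonneg (1+cb)]

lemma exp_I_form (x : ℝ) :
    Complex.exp ((x : ℂ) * Complex.I) = (Real.cos x : ℂ) + (Real.sin x : ℂ) * Complex.I := by
  rw [Complex.exp_mul_I, ← Complex.ofReal_cos, ← Complex.ofReal_sin]

lemma abs_coef_exp (c x : ℝ) (hc : 0 ≤ c) :
    ‖(c : ℂ) * Complex.exp ((x : ℂ) * Complex.I)‖ = c := by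
  rw [norm_mul, Complex.norm_exp_ofReal_mul_I, mul_one, Complex.norm_of_nonneg hc]

set_option maxHeartbeats 1000000 in
lemma zz_abs (t : ℝ) : ‖zz t‖ ≤ 99/100 := by
  set s := Real.sqrt 5 with hsdef
  have hs2 : s^2 = 5 := Real.sq_sqrt (by norm_num)
  have hs0 : 0 ≤ s := Real.sqrt_nonneg 5
  have hsl : 2 < s := by nlinarith
  have hsu : s < 3 := by nlinarith
  have hsq5 : sq5 = (s : ℂ) := by rw [sq5, hsdef]
  have hzz : zz t = ((1/4 : ℝ) : ℂ) * Complex.exp (((-(2*t) : ℝ) : ℂ) * Complex.I)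
      - ((1/2 : ℝ) : ℂ)
      + (((5+s)/40 : ℝ) : ℂ) * Complex.exp ((((1+s)*t : ℝ) : ℂ) * Complex.I)
      + (((5-s)/40 : ℝ) : ℂ) * Complex.exp ((((1-s)*t : ℝ) : ℂ) * Complex.I) := by
    rw [zz, hsq5,
      show ((t:ℂ) * Complex.I * (-2)) = ((-(2*t) : ℝ) : ℂ) * Complex.I by push_cast; ring,
      show ((t:ℂ) * Complex.I * (1 + (s:ℂ))) = (((1+s)*t : ℝ) : ℂ) * Complex.I by
        push_cast; ring,
      show ((t:ℂ) * Complex.I * (1 - (s:ℂ))) = (((1-s)*t : ℝ) : ℂ) * Complex.I by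
        push_cast; ring]
    push_cast
    ring
  have hre : (zz t).re = -1/2 + 1/4 * Real.cos (-(2*t))
      + (5+s)/40 * Real.cos ((1+s)*t) + (5-s)/40 * Real.cos ((1-s)*t) := by
    rw [hzz]
    simp only [Complex.add_re, Complex.add_im, Complex.sub_re, Complex.sub_im,
      Complex.mul_re, Complex.mul_im, Complex.ofReal_re, Complex.ofReal_im,
      Complex.exp_ofReal_mul_I_re, Complex.exp_ofReal_mul_I_im]
    ring
  have him : (zz t).im = 1/4 * Real.sin (-(2*t))
      + (5+s)/40 * Real.sin ((1+s)*t) + (5-s)/40 * Real.sin ((1-s)*t) := by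
    rw [hzz]
    simp only [Complex.add_re, Complex.add_im, Complex.sub_re, Complex.sub_im,
      Complex.mul_re, Complex.mul_im, Complex.ofReal_re, Complex.ofReal_im,
      Complex.exp_ofReal_mul_I_re, Complex.exp_ofReal_mul_I_im]
    ring
  set ca := Real.cos ((1+s)*t)
  set sa := Real.sin ((1+s)*t)
  set cb := Real.cos ((1-s)*t)
  set sb := Real.sin ((1-s)*t)
  set R : ℝ := (zz t).re with hR
  set Im : ℝ := (zz t).im with hIm
  have htri : ‖zz t + 1/2‖ ≤ 1/2 := by
    have hsum : zz t + 1/2 =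
        ((1/4 : ℝ) : ℂ) * Complex.exp (((-(2*t) : ℝ) : ℂ) * Complex.I)
          + ((((5+s)/40 : ℝ) : ℂ) * Complex.exp ((((1+s)*t : ℝ) : ℂ) * Complex.I)
            + (((5-s)/40 : ℝ) : ℂ) * Complex.exp ((((1-s)*t : ℝ) : ℂ) * Complex.I)) := by
      rw [hzz]; push_cast; ring
    rw [hsum]
    refine le_trans (norm_add_le _ _)
      (le_trans (add_le_add_right (norm_add_le _ _) _) ?_)
    rw [abs_coef_exp _ _ (by norm_num), abs_coef_exp _ _ (by nlinarith),
      abs_coef_exp _ _ (by nlinarith)]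
    linarith
  have hq : (R + 1/2)^2 + Im^2 ≤ 1/4 := by
    have h0 : ‖zz t + 1/2‖ = Real.sqrt ((R+1/2)^2 + Im^2) := by
      rw [show zz t + 1/2 = ((R + 1/2 : ℝ) : ℂ) + ((Im : ℝ) : ℂ) * Complex.I by
        rw [Complex.ext_iff]
        constructor <;> simp [hR, hIm]]
      rw [Complex.norm_add_mul_I]
    rw [h0] at htri
    have hnn : 0 ≤ (R+1/2)^2 + Im^2 := by positivity
    nlinarith [Real.sq_sqrt hnn, Real.sqrt_nonneg ((R+1/2)^2 + Im^2)]
  have key : R^2 + Im^2 ≤ (99/100)^2 := by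
    by_contra hcon
    push_neg at hcon
    have hca1 : -1 ≤ ca := Real.neg_one_le_cos _
    have hcb1 : -1 ≤ cb := Real.neg_one_le_cos _
    have hc1 : -1 ≤ Real.cos (-(2*t)) := Real.neg_one_le_cos _
    have hRlt : R < -(9801/10000) := by nlinarith
    have hsum2 : 1/4 * (1 + Real.cos (-(2*t))) + (5+s)/40 * (1+ca) + (5-s)/40 * (1+cb)
        < 1/50 := by
      have he : 1/4 * (1 + Real.cos (-(2*t))) + (5+s)/40 * (1+ca) + (5-s)/40 * (1+cb)
          = R + 1 := by rw [hre]; ring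
      rw [he]; linarith
    have hnn2 : 0 ≤ (5+s)/40 * (1+ca) := by
      apply mul_nonneg <;> nlinarith
    have hnn3 : 0 ≤ (5-s)/40 * (1+cb) := by
      apply mul_nonneg <;> nlinarith
    have hnn1 : 0 ≤ 1/4 * (1 + Real.cos (-(2*t))) := by nlinarith
    have hcosr : Real.cos (-(2*t)) = ca * cb - sa * sb := by
      rw [show -(2*t) = -((1+s)*t + (1-s)*t) by ring, Real.cos_neg, Real.cos_add]
    have h1 : 1 + (ca*cb - sa*sb) < 2/25 := by rw [← hcosr]; linarith
    have h2 : 1 + ca < 3/25 := by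
      nlinarith [mul_nonneg (by linarith : (0:ℝ) ≤ s - 2) (by linarith : (0:ℝ) ≤ 1 + ca)]
    have h3 : 1 + cb < 2/5 := by
      nlinarith [mul_nonneg (by linarith : (0:ℝ) ≤ 3 - s) (by linarith : (0:ℝ) ≤ 1 + cb)]
    exact final_contra ca sa cb sb (Real.sin_sq_add_cos_sq _) (Real.sin_sq_add_cos_sq _)
      h1 h2 h3
  have habs : ‖zz t‖ = Real.sqrt (R^2 + Im^2) := by
    rw [show zz t = ((R : ℝ) : ℂ) + ((Im : ℝ) : ℂ) * Complex.I from by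
      rw [Complex.ext_iff]; constructor <;> simp [hR, hIm]]
    rw [Complex.norm_add_mul_I]
  rw [habs]
  calc Real.sqrt (R^2 + Im^2) ≤ Real.sqrt ((99/100)^2) := Real.sqrt_le_sqrt key
    _ = 99/100 := Real.sqrt_sq (by norm_num)


theorem stmt_10 (x y : Fin 5) (hxy : x ≠ y) (hnadj : wheelAdj x y = 0) :
    ¬ PGST wheelAdj x y := by
  intro hP
  obtain ⟨t, ht, habs⟩ := hP (1/100) (by norm_num)
  have hxy4 : (x = 0 ∧ y = 2) ∨ (x = 2 ∧ y = 0) ∨ (x = 1 ∧ y = 3) ∨ (x = 3 ∧ y = 1) := by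
    fin_cases x <;> fin_cases y <;>
      first
        | exact absurd rfl hxy
        | exact Or.inl ⟨rfl, rfl⟩
        | exact Or.inr (Or.inl ⟨rfl, rfl⟩)
        | exact Or.inr (Or.inr (Or.inl ⟨rfl, rfl⟩))
        | exact Or.inr (Or.inr (Or.inr ⟨rfl, rfl⟩))
        | (norm_num [wheelAdj] at hnadj)
  rw [entry_eq t x y hxy4] at habs
  have hb := zz_abs t
  norm_num at habs
  linarith
end

section
/- Let G be a graph on N = 2n vertices with n odd, with an involution σ (a graph automorphism with σ² = id) having no fixed vertices (σ(v) ≠ v for all v) and no fixed edges (no edge of the form {v, σv}), and let Q : V(G) → ℝ be a potential symmetric across σ (Q(v) = Q(σv) for all v). Let A be the adjacency matrix of G plus the diagonal matrix diag(Q). If every eigenvector φ of A satisfies φ(x) ≠ 0 and φ(σx) ≠ 0, then there is no pretty good state transfer between x and σx. -/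
open Matrix Polynomial

lemma transition_apply {V : Type*} [Fintype V] [DecidableEq V]
    (A : Matrix V V ℝ) (hA : A.IsHermitian) (t : ℝ) (x y : V) :
    transition A t x y = ∑ k, Complex.exp ((t : ℂ) * Complex.I * (hA.eigenvalues k : ℂ)) *
      (hA.eigenvectorBasis k x : ℂ) * (hA.eigenvectorBasis k y : ℂ) := by
  classical
  set U : Matrix V V ℝ := (hA.eigenvectorUnitary : Matrix V V ℝ) with hU
  have hU1 : U * Uᵀ = 1 := by
    have := (Matrix.mem_unitaryGroup_iff).mp hA.eigenvectorUnitary.2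
    simpa [Matrix.star_eq_conjTranspose] using this
  have hspec : A = U * Matrix.diagonal hA.eigenvalues * Uᵀ := by
    have := hA.spectral_theorem
    simpa [Matrix.star_eq_conjTranspose] using this
  set f : ℝ →+* ℂ := Complex.ofRealHom with hf
  set Uc : Matrix V V ℂ := U.map f with hUc
  have hUc1 : Uc * Ucᵀ = 1 := by
    rw [hUc, ← Matrix.transpose_map, ← Matrix.map_mul, hU1]
    simp
  have hUcinv : Uc⁻¹ = Ucᵀ := Matrix.inv_eq_right_inv hUc1
  have hUcunit : IsUnit Uc := by
    exact Matrix.isUnit_iff_isUnit_det Uc |>.mpr (by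
      have : Uc.det * Ucᵀ.det = 1 := by rw [← Matrix.det_mul, hUc1, Matrix.det_one]
      exact IsUnit.of_mul_eq_one _ this)
  have hmap : A.map (fun a => (a : ℂ)) = Uc * Matrix.diagonal (fun k => (hA.eigenvalues k : ℂ)) * Ucᵀ := by
    have : A.map f = (U * Matrix.diagonal hA.eigenvalues * Uᵀ).map f := by rw [← hspec]
    rw [show (fun a : ℝ => (a : ℂ)) = ⇑f from rfl, this, Matrix.map_mul, Matrix.map_mul,
      Matrix.transpose_map, Matrix.diagonal_map (by simp)]
    rfl
  have key : transition A t = Uc * Matrix.diagonal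
      (fun k => Complex.exp ((t : ℂ) * Complex.I * (hA.eigenvalues k : ℂ))) * Ucᵀ := by
    rw [transition, hmap, ← hUcinv]
    have hdg : (Matrix.diagonal (fun k => (t : ℂ) * Complex.I * (hA.eigenvalues k : ℂ)))
        = ((t : ℂ) * Complex.I) • Matrix.diagonal (fun k => (hA.eigenvalues k : ℂ)) := by
      ext i j
      rcases eq_or_ne i j with rfl | h
      · simp
      · simp [Matrix.diagonal_apply_ne _ h]
    have hsmul : Uc * (Matrix.diagonal (fun k => (t : ℂ) * Complex.I * (hA.eigenvalues k : ℂ))) * Uc⁻¹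
        = ((t : ℂ) * Complex.I) • (Uc * Matrix.diagonal (fun k => (hA.eigenvalues k : ℂ)) * Uc⁻¹) := by
      rw [hdg, Matrix.mul_smul, Matrix.smul_mul]
    rw [← hsmul, Matrix.exp_conj _ _ hUcunit, Matrix.exp_diagonal, hUcinv]
    congr 2
    funext k
    rw [Pi.exp_def]
    rw [← Complex.exp_eq_exp_ℂ]
  rw [key]
  rw [Matrix.mul_apply]
  apply Finset.sum_congr rfl
  intro k _
  rw [Matrix.mul_apply, Finset.sum_eq_single k (by intro b _ hb; simp [Matrix.diagonal_apply_ne _ hb]) (by simp)]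
  simp only [Matrix.diagonal_apply_eq, hUc, hU, Matrix.transpose_apply, Matrix.map_apply,
    Matrix.IsHermitian.eigenvectorUnitary_apply, hf, Complex.ofRealHom_eq_coe]
  ring

lemma abs_prod_sub_prod_le {ι : Type*} (s : Finset ι) (w a : ι → ℂ)
    (hw : ∀ i ∈ s, ‖w i‖ ≤ 1) (ha : ∀ i ∈ s, ‖a i‖ ≤ 1) :
    ‖∏ i ∈ s, w i - ∏ i ∈ s, a i‖ ≤ ∑ i ∈ s, ‖w i - a i‖ := by
  classical
  induction s using Finset.induction with
  | empty => simp
  | @insert i s' hx ih =>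
    rw [Finset.prod_insert hx, Finset.prod_insert hx, Finset.sum_insert hx]
    have h1 : w i * ∏ j ∈ s', w j - a i * ∏ j ∈ s', a j
        = (w i - a i) * ∏ j ∈ s', a j + w i * (∏ j ∈ s', w j - ∏ j ∈ s', a j) := by ring
    rw [h1]
    refine (norm_add_le _ _).trans ?_
    have hpa : ‖∏ j ∈ s', a j‖ ≤ 1 := by
      rw [norm_prod]
      exact Finset.prod_le_one (fun j _ => norm_nonneg _)
        (fun j hj => ha j (Finset.mem_insert_of_mem hj))
    have h2 : ‖(w i - a i) * ∏ j ∈ s', a j‖ ≤ ‖w i - a i‖ := by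
      rw [norm_mul]
      nlinarith [norm_nonneg (w i - a i), norm_nonneg (∏ j ∈ s', a j)]
    have h3 : ‖w i * (∏ j ∈ s', w j - ∏ j ∈ s', a j)‖
        ≤ ∑ j ∈ s', ‖w j - a j‖ := by
      rw [norm_mul]
      have := ih (fun j hj => hw j (Finset.mem_insert_of_mem hj))
        (fun j hj => ha j (Finset.mem_insert_of_mem hj))
      have hwi := hw i (Finset.mem_insert_self i s')
      nlinarith [norm_nonneg (∏ j ∈ s', w j - ∏ j ∈ s', a j), norm_nonneg (w i)]
    linarith

set_option maxHeartbeats 1000000 in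
theorem stmt_18 {V : Type*} [Fintype V] [DecidableEq V] (n : ℕ) (hodd : Odd n)
    (hcard : Fintype.card V = 2 * n)
    (G : SimpleGraph V) [DecidableRel G.Adj]
    (σ : G ≃g G) (hinv : ∀ v, σ (σ v) = v)
    (hfixv : ∀ v, σ v ≠ v) (hfixe : ∀ v, ¬ G.Adj v (σ v))
    (Q : V → ℝ) (hQ : ∀ v, Q (σ v) = Q v)
    (A : Matrix V V ℝ) (hAdef : A = G.adjMatrix ℝ + Matrix.diagonal Q)
    (x : V)
    (heig : ∀ (lam : ℝ) (φ : V → ℝ), φ ≠ 0 → A *ᵥ φ = lam • φ →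
      φ x ≠ 0 ∧ φ (σ x) ≠ 0) :
    ¬ PGST A x (σ x) := by
  classical
  intro hPGST
  -- basic facts
  have hn0 : 0 < n := hodd.pos
  have hAH : A.IsHermitian := by
    rw [hAdef]
    refine Matrix.IsHermitian.add ?_ (Matrix.isHermitian_diagonal _)
    have h := G.transpose_adjMatrix (α := ℝ)
    unfold Matrix.IsHermitian
    rw [← h]
    ext i j
    simp [Matrix.conjTranspose_apply]
  set μ : V → ℝ := hAH.eigenvalues with hμ
  set φ : V → V → ℝ := fun k => ⇑(hAH.eigenvectorBasis k) with hφ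
  have heigvec : ∀ k, A *ᵥ φ k = μ k • φ k := fun k => hAH.mulVec_eigenvectorBasis k
  have hφne : ∀ k, φ k ≠ 0 := by
    intro k hk
    have h1 : ‖hAH.eigenvectorBasis k‖ = 1 := hAH.eigenvectorBasis.orthonormal.1 k
    have h0 : hAH.eigenvectorBasis k = 0 := by
      ext v
      have : φ k v = 0 := by rw [hk]; rfl
      simpa [hφ] using this
    rw [h0] at h1
    simp at h1
  have hφx : ∀ k, φ k x ≠ 0 ∧ φ k (σ x) ≠ 0 := fun k => heig (μ k) (φ k) (hφne k) (heigvec k)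
  have hAsym : ∀ u v, A (σ u) (σ v) = A u v := by
    intro u v
    rw [hAdef]
    simp only [Matrix.add_apply, SimpleGraph.adjMatrix_apply]
    have hadj : G.Adj (σ u) (σ v) ↔ G.Adj u v := σ.map_adj_iff
    have hdiag : Matrix.diagonal Q (σ u) (σ v) = Matrix.diagonal Q u v := by
      rcases eq_or_ne u v with rfl | huv
      · simp [Matrix.diagonal_apply_eq, hQ]
      · have : σ u ≠ σ v := fun h => huv (σ.toEquiv.injective h)
        rw [Matrix.diagonal_apply_ne _ this, Matrix.diagonal_apply_ne _ huv]
    rw [hdiag]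
    congr 1
    simp [hadj]
  have hAσ : ∀ (f : V → ℝ) (v : V), (A *ᵥ fun w => f (σ w)) v = (A *ᵥ f) (σ v) := by
    intro f v
    simp only [Matrix.mulVec, dotProduct]
    rw [← Equiv.sum_comp σ.toEquiv (fun w => A (σ v) w * f w)]
    apply Finset.sum_congr rfl
    intro w _
    have h1 : A (σ v) (σ.toEquiv w) = A v w := by
      have := hAsym v w
      simpa using this
    rw [h1]
    have h2 : f (σ.toEquiv w) = f (σ w) := rfl
    rw [h2]
  set ε : V → ℝ := fun k => φ k (σ x) / φ k x with hε
  have hrel : ∀ k v, φ k (σ v) = ε k * φ k v := by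
    intro k v
    set ψ : V → ℝ := fun v => φ k (σ v) with hψ
    have hψeig : A *ᵥ ψ = μ k • ψ := by
      funext u
      rw [hψ]
      show (A *ᵥ fun w => φ k (σ w)) u = _
      rw [hAσ (φ k) u, heigvec k]
      simp [Pi.smul_apply]
    set χ : V → ℝ := ψ x • φ k - φ k x • ψ with hχ
    have hχeig : A *ᵥ χ = μ k • χ := by
      rw [hχ, Matrix.mulVec_sub, Matrix.mulVec_smul, Matrix.mulVec_smul, heigvec k, hψeig,
        smul_sub]
      rw [smul_comm (ψ x) (μ k), smul_comm (φ k x) (μ k)]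
    have hχx : χ x = 0 := by
      simp only [hχ, Pi.sub_apply, Pi.smul_apply, smul_eq_mul]
      ring
    have hχ0 : χ = 0 := by
      by_contra hne
      exact (heig (μ k) χ hne hχeig).1 hχx
    have := congrFun hχ0 v
    simp only [hχ, Pi.sub_apply, Pi.smul_apply, smul_eq_mul, Pi.zero_apply, sub_eq_zero] at this
    have hx := (hφx k).1
    rw [hε]
    field_simp
    simp only [hψ] at this
    linear_combination -this
  have hε1 : ∀ k, ε k = 1 ∨ ε k = -1 := by
    intro k
    have h1 : φ k (σ (σ x)) = ε k * φ k (σ x) := hrel k (σ x)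
    rw [hinv x, hrel k x] at h1
    have hx := (hφx k).1
    have h2 : (ε k * ε k - 1) * φ k x = 0 := by linear_combination -h1
    rcases mul_eq_zero.mp h2 with h3 | h3
    · exact mul_self_eq_one_iff.mp (by linarith)
    · exact absurd h3 hx
  have hεsq : ∀ k, ε k * ε k = 1 := by
    intro k; rcases hε1 k with h | h <;> rw [h] <;> norm_num
  -- orthonormality facts
  set U : Matrix V V ℝ := (hAH.eigenvectorUnitary : Matrix V V ℝ) with hUdef
  have hUφ : ∀ a k, U a k = φ k a := by
    intro a k
    rw [hUdef]
    simp [Matrix.IsHermitian.eigenvectorUnitary_apply, hφ]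
  have hU1 : U * Uᵀ = 1 := by
    have := (Matrix.mem_unitaryGroup_iff).mp hAH.eigenvectorUnitary.2
    simpa [Matrix.star_eq_conjTranspose] using this
  have hU2 : Uᵀ * U = 1 := by
    have := (Matrix.mem_unitaryGroup_iff').mp hAH.eigenvectorUnitary.2
    simpa [Matrix.star_eq_conjTranspose] using this
  have hspec : A = U * Matrix.diagonal μ * Uᵀ := by
    have := hAH.spectral_theorem
    simpa [Matrix.star_eq_conjTranspose] using this
  have hcol : ∀ k, ∑ v, φ k v * φ k v = 1 := by
    intro k
    have := congrFun (congrFun hU2 k) k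
    simp only [Matrix.mul_apply, Matrix.transpose_apply, Matrix.one_apply_eq] at this
    rw [← this]
    exact Finset.sum_congr rfl fun v _ => by rw [hUφ]
  have hrowxx : ∑ k, φ k x * φ k x = 1 := by
    have := congrFun (congrFun hU1 x) x
    simp only [Matrix.mul_apply, Matrix.transpose_apply, Matrix.one_apply_eq] at this
    rw [← this]
    exact Finset.sum_congr rfl fun k _ => by rw [hUφ]
  have hrowσ : ∀ v, ∑ k, φ k (σ v) * φ k v = 0 := by
    intro v
    have := congrFun (congrFun hU1 (σ v)) v
    rw [Matrix.one_apply_ne (hfixv v)] at this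
    simp only [Matrix.mul_apply, Matrix.transpose_apply] at this
    rw [← this]
    exact Finset.sum_congr rfl fun k _ => by rw [hUφ, hUφ]
  have hAentry : ∀ a b, A a b = ∑ k, φ k a * μ k * φ k b := by
    intro a b
    rw [hspec]
    rw [Matrix.mul_apply]
    apply Finset.sum_congr rfl
    intro k _
    rw [Matrix.mul_apply, Finset.sum_eq_single k
      (by intro c _ hc; simp [Matrix.diagonal_apply_ne _ hc]) (by simp)]
    rw [Matrix.diagonal_apply_eq, Matrix.transpose_apply, hUφ, hUφ]
  have hAσv0 : ∀ v, A (σ v) v = 0 := by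
    intro v
    rw [hAdef]
    simp only [Matrix.add_apply, SimpleGraph.adjMatrix_apply]
    have h1 : ¬ G.Adj (σ v) v := fun h => hfixe v h.symm
    have h2 : Matrix.diagonal Q (σ v) v = 0 := Matrix.diagonal_apply_ne _ (hfixv v)
    rw [h2]
    simp [h1]
  -- the two trace identities
  have hsum1 : ∑ k, ε k = 0 := by
    have h1 : ∀ k, ε k = ∑ v, φ k (σ v) * φ k v := by
      intro k
      rw [show (∑ v, φ k (σ v) * φ k v) = ∑ v, ε k * (φ k v * φ k v) by
        exact Finset.sum_congr rfl fun v _ => by rw [hrel k v]; ring]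
      rw [← Finset.mul_sum, hcol k, mul_one]
    calc ∑ k, ε k = ∑ k, ∑ v, φ k (σ v) * φ k v := Finset.sum_congr rfl fun k _ => h1 k
    _ = ∑ v, ∑ k, φ k (σ v) * φ k v := Finset.sum_comm
    _ = 0 := by simp [hrowσ]
  have hsum2 : ∑ k, ε k * μ k = 0 := by
    have h1 : ∀ k, ε k * μ k = ∑ v, φ k (σ v) * μ k * φ k v := by
      intro k
      rw [show (∑ v, φ k (σ v) * μ k * φ k v) = ∑ v, (ε k * μ k) * (φ k v * φ k v) by
        exact Finset.sum_congr rfl fun v _ => by rw [hrel k v]; ring]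
      rw [← Finset.mul_sum, hcol k, mul_one]
    calc ∑ k, ε k * μ k = ∑ k, ∑ v, φ k (σ v) * μ k * φ k v :=
        Finset.sum_congr rfl fun k _ => h1 k
    _ = ∑ v, ∑ k, φ k (σ v) * μ k * φ k v := Finset.sum_comm
    _ = ∑ v, A (σ v) v := Finset.sum_congr rfl fun v _ => (hAentry (σ v) v).symm
    _ = 0 := by simp [hAσv0]
  -- the count of antisymmetric eigenvectors
  set s : Finset V := Finset.univ.filter (fun k => ε k = -1) with hs
  have hscard : s.card = n := by
    have hsplit : ∑ k, ε k = ∑ k ∈ s, ε k + ∑ k ∈ sᶜ, ε k :=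
      (Finset.sum_add_sum_compl s _).symm
    have h1 : ∑ k ∈ s, ε k = -(s.card : ℝ) := by
      rw [Finset.sum_congr rfl (fun k hk => (Finset.mem_filter.mp hk).2)]
      simp [mul_comm, hs]
    have h2 : ∑ k ∈ sᶜ, ε k = (sᶜ.card : ℝ) := by
      have hall : ∀ k ∈ sᶜ, ε k = 1 := by
        intro k hk
        rcases hε1 k with h | h
        · exact h
        · exact absurd (Finset.mem_filter.mpr ⟨Finset.mem_univ k, h⟩) (Finset.mem_compl.mp hk)
      rw [Finset.sum_congr rfl hall, Finset.sum_const, nsmul_eq_mul, mul_one]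
    rw [h1, h2, hsum1] at hsplit
    have hcardc : (sᶜ.card : ℝ) = (Fintype.card V : ℝ) - s.card := by
      rw [Finset.card_compl]
      have hle : s.card ≤ Fintype.card V := Finset.card_le_univ s
      push_cast [hle]
      ring
    rw [hcardc, hcard] at hsplit
    have : (s.card : ℝ) = n := by push_cast at hsplit ⊢; linarith
    exact_mod_cast this
  -- the analytic contradiction
  have hVne : Nonempty V := by
    rw [← Fintype.card_pos_iff, hcard]; omega
  set r : V → ℝ := fun k => φ k x * φ k x with hrdef
  have hr0 : ∀ k, 0 < r k := fun k => mul_self_pos.mpr (hφx k).1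
  have hrsum : ∑ k, r k = 1 := hrowxx
  have hcφ : ∀ k, φ k x * φ k (σ x) = ε k * r k := by
    intro k; rw [hrel k x, hrdef]; ring
  set m : ℝ := Finset.univ.inf' Finset.univ_nonempty r with hmdef
  have hm0 : 0 < m := by
    rw [hmdef, Finset.lt_inf'_iff]
    exact fun k _ => hr0 k
  have hmr : ∀ k, m ≤ r k := fun k => Finset.inf'_le r (Finset.mem_univ k)
  have hm1 : m ≤ 1 := by
    obtain ⟨k0⟩ := hVne
    have h1 : r k0 ≤ ∑ k, r k :=
      Finset.single_le_sum (fun k _ => (hr0 k).le) (Finset.mem_univ k0)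
    rw [hrsum] at h1
    exact (hmr k0).trans h1
  set ε₀ : ℝ := m / (2 * (2 * n : ℝ) ^ 2) with hε₀def
  have hden : (0:ℝ) < 2 * (2 * n : ℝ) ^ 2 := by positivity
  have hε₀0 : 0 < ε₀ := div_pos hm0 hden
  have hε₀small : ε₀ ≤ 1 / 8 := by
    rw [hε₀def]
    have h4 : (4:ℝ) ≤ (2 * n : ℝ) ^ 2 := by
      have : (1:ℝ) ≤ n := by exact_mod_cast hn0
      nlinarith
    rw [div_le_div_iff₀ hden (by norm_num)]
    nlinarith
  obtain ⟨t, ht0, hS⟩ := hPGST ε₀ hε₀0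
  set z : V → ℂ := fun k => Complex.exp ((t : ℂ) * Complex.I * (μ k : ℂ)) with hzdef
  set S : ℂ := transition A t x (σ x) with hSdef
  have hSexp : S = ∑ k, z k * ((ε k * r k : ℝ) : ℂ) := by
    rw [hSdef, transition_apply A hAH t x (σ x)]
    apply Finset.sum_congr rfl
    intro k _
    show Complex.exp ((t : ℂ) * Complex.I * ((μ k : ℝ) : ℂ)) * ((φ k x : ℝ) : ℂ) *
        ((φ k (σ x) : ℝ) : ℂ) = z k * ((ε k * r k : ℝ) : ℂ)
    simp only [hzdef]
    rw [mul_assoc, ← Complex.ofReal_mul, hcφ k]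
  have hzabs : ∀ k, ‖z k‖ = 1 := by
    intro k
    show ‖Complex.exp ((t : ℂ) * Complex.I * (μ k : ℂ))‖ = 1
    have heq : (t : ℂ) * Complex.I * (μ k : ℂ) = ((t * μ k : ℝ) : ℂ) * Complex.I := by
      push_cast; ring
    rw [heq, Complex.norm_exp_ofReal_mul_I]
  have hSabs : 1 - ε₀ < ‖S‖ := hS
  have hSpos : 0 < ‖S‖ := by linarith
  set γ : ℂ := S / ((‖S‖ : ℝ) : ℂ) with hγdef
  have hγabs : ‖γ‖ = 1 := by
    rw [hγdef, norm_div, Complex.norm_real, norm_norm, div_self hSpos.ne']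
  have hγconj : (starRingEnd ℂ) γ * γ = 1 := by
    have := Complex.mul_conj γ
    rw [mul_comm] at this
    rw [this, Complex.normSq_eq_norm_sq, hγabs]
    norm_num
  set u : V → ℂ := fun k => (ε k : ℂ) * z k * (starRingEnd ℂ) γ with hudef
  have huabs : ∀ k, ‖u k‖ = 1 := by
    intro k
    rw [hudef]
    simp only [norm_mul, Complex.norm_conj, Complex.norm_real]
    rcases hε1 k with h | h <;> rw [h, hzabs k, hγabs] <;> norm_num
  have hure : ∀ k, (u k).re ≤ 1 := by
    intro k
    have := Complex.re_le_norm (u k)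
    rw [huabs k] at this
    exact this
  have hSγ : S * (starRingEnd ℂ) γ = ((‖S‖ : ℝ) : ℂ) := by
    rw [hγdef, map_div₀]
    rw [Complex.conj_ofReal]
    rw [← mul_div_assoc, Complex.mul_conj, Complex.normSq_eq_norm_sq]
    push_cast
    rw [sq, mul_div_assoc, div_self (Complex.ofReal_ne_zero.mpr hSpos.ne'), mul_one]
  have hsumre : ∑ k, r k * (u k).re = ‖S‖ := by
    have h1 : S * (starRingEnd ℂ) γ = ∑ k, ((r k : ℝ) : ℂ) * u k := by
      rw [hSexp, Finset.sum_mul]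
      apply Finset.sum_congr rfl
      intro k _
      simp only [hudef]
      push_cast
      ring
    have h2 := congrArg Complex.re (h1.symm.trans hSγ)
    rw [Complex.re_sum, Complex.ofReal_re] at h2
    rw [← h2]
    exact Finset.sum_congr rfl fun k _ => (Complex.re_ofReal_mul _ _).symm
  have hperk : ∀ j, ‖u j - 1‖ ≤ 1 / (2 * n : ℝ) := by
    intro j
    have hsplit : r j * (u j).re + ∑ k ∈ Finset.univ.erase j, r k * (u k).re
        = ‖S‖ := by
      rw [← hsumre]
      exact Finset.add_sum_erase _ (fun k => r k * (u k).re) (Finset.mem_univ j)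
    have hrest : ∑ k ∈ Finset.univ.erase j, r k * (u k).re ≤ 1 - r j := by
      have h1 : ∑ k ∈ Finset.univ.erase j, r k * (u k).re ≤ ∑ k ∈ Finset.univ.erase j, r k :=
        Finset.sum_le_sum (fun k _ => by nlinarith [hure k, hr0 k])
      have h2 : ∑ k ∈ Finset.univ.erase j, r k = 1 - r j := by
        rw [← hrsum, Finset.sum_erase_eq_sub (Finset.mem_univ j)]
      linarith
    have hre : 1 - ε₀ / m ≤ (u j).re := by
      have h3 : r j - ε₀ < r j * (u j).re := by linarith
      have h4 : ε₀ / m * m ≤ ε₀ / m * r j :=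
        mul_le_mul_of_nonneg_left (hmr j) (by positivity)
      have h5 : ε₀ / m * m = ε₀ := by field_simp
      have h6 : r j * (1 - ε₀ / m) ≤ r j * (u j).re := by
        have h7 : r j * (1 - ε₀ / m) = r j - ε₀ / m * r j := by ring
        rw [h7]
        linarith
      exact (mul_le_mul_iff_right₀ (hr0 j)).mp h6
    have habs2 : ‖u j - 1‖ ^ 2 = 2 - 2 * (u j).re := by
      have hn1 : Complex.normSq (u j) = 1 := by
        rw [Complex.normSq_eq_norm_sq, huabs j]; norm_num
      rw [Complex.sq_norm, Complex.normSq_apply, Complex.sub_re, Complex.sub_im,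
        Complex.one_re, Complex.one_im]
      rw [Complex.normSq_apply] at hn1
      linear_combination hn1
    have hεm : ε₀ / m = 1 / (2 * (2 * n : ℝ) ^ 2) := by
      rw [hε₀def, div_div, mul_comm, ← div_div, div_self hm0.ne']
    have hb : ‖u j - 1‖ ^ 2 ≤ (1 / (2 * n : ℝ)) ^ 2 := by
      rw [habs2]
      have : 2 - 2 * (u j).re ≤ 2 * (ε₀ / m) := by linarith
      rw [hεm] at this
      have hn1 : (0:ℝ) < (2 * n : ℝ) := by positivity
      calc 2 - 2 * (u j).re ≤ 2 * (1 / (2 * (2 * n : ℝ) ^ 2)) := this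
      _ = (1 / (2 * n : ℝ)) ^ 2 := by field_simp
    have hnn := norm_nonneg (u j - 1)
    have hb2 : (0:ℝ) < 1 / (2 * n : ℝ) := by positivity
    exact (pow_le_pow_iff_left₀ hnn hb2.le two_ne_zero).mp hb
  -- the two products
  set w : V → ℂ := fun k => Complex.exp ((t : ℂ) * Complex.I * ((ε k * μ k : ℝ) : ℂ)) with hwdef
  have hprodw : ∏ k, w k = 1 := by
    rw [hwdef, ← Complex.exp_sum]
    have h1 : ∑ k, (t : ℂ) * Complex.I * ((ε k * μ k : ℝ) : ℂ)
        = (t : ℂ) * Complex.I * ((∑ k, ε k * μ k : ℝ) : ℂ) := by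
      rw [← Finset.mul_sum]
      congr 1
      push_cast
      rfl
    rw [h1, hsum2]
    simp
  set a : V → ℂ := fun k => if ε k = -1 then -((starRingEnd ℂ) γ) else γ with hadef
  have hproda : ∏ k, a k = -1 := by
    rw [hadef, Finset.prod_ite]
    rw [Finset.prod_const, Finset.prod_const]
    have hc1 : (Finset.univ.filter fun k => ε k = -1).card = n := hscard
    have hc2 : (Finset.univ.filter fun k => ¬ ε k = -1).card = n := by
      have := Finset.card_filter_add_card_filter_not
        (s := (Finset.univ : Finset V)) (p := fun k => ε k = -1)
      rw [Finset.card_univ, hcard, hc1] at this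
      omega
    rw [hc1, hc2]
    have : (-((starRingEnd ℂ) γ)) ^ n * γ ^ n = (-1) ^ n * ((starRingEnd ℂ) γ * γ) ^ n := by
      rw [mul_pow, neg_pow]
      ring
    rw [this, hγconj, one_pow, mul_one, hodd.neg_one_pow]
  have hwa : ∀ k, ‖w k - a k‖ ≤ 1 / (2 * n : ℝ) := by
    intro k
    rcases hε1 k with h | h
    · have hw : w k = z k := by
        simp only [hwdef, hzdef, h]
        norm_num
      have ha : a k = γ := by
        simp only [hadef, h]
        norm_num
      have hzu : z k - γ = γ * (u k - 1) := by
        simp only [hudef, h]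
        push_cast
        linear_combination (-(z k)) * hγconj
      rw [hw, ha, hzu, norm_mul, hγabs, one_mul]
      exact hperk k
    · have hw : w k = (starRingEnd ℂ) (z k) := by
        simp only [hwdef, hzdef, ← Complex.exp_conj]
        congr 1
        rw [h]
        simp only [_root_.map_mul, Complex.conj_ofReal, Complex.conj_I]
        push_cast
        ring
      have ha : a k = -((starRingEnd ℂ) γ) := by
        simp only [hadef, h]
        norm_num
      have hc : γ * (starRingEnd ℂ) γ = 1 := by rw [mul_comm]; exact hγconj
      have hcc : (starRingEnd ℂ) γ * γ = 1 := hγconj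
      have hzu : (starRingEnd ℂ) (z k) - -((starRingEnd ℂ) γ)
          = -((starRingEnd ℂ) (γ * (u k - 1))) := by
        simp only [hudef, h]
        push_cast
        simp only [_root_.map_mul, _root_.map_sub, _root_.map_one, _root_.map_neg,
          Complex.conj_conj]
        have hc2 := congrArg (starRingEnd ℂ) hγconj
        simp only [_root_.map_mul, _root_.map_one, Complex.conj_conj] at hc2
        linear_combination (-(starRingEnd ℂ) (z k)) * hc2
      rw [hw, ha, hzu]
      rw [show ‖-((starRingEnd ℂ) (γ * (u k - 1)))‖
          = ‖(starRingEnd ℂ) (γ * (u k - 1))‖ by simp]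
      rw [Complex.norm_conj, norm_mul, hγabs, one_mul]
      exact hperk k
  -- finish
  have hfinal : ‖(∏ k, w k) - ∏ k, a k‖ ≤ ∑ k : V, ‖w k - a k‖ :=
    abs_prod_sub_prod_le Finset.univ w a
      (fun k _ => by
        have : ‖w k‖ = 1 := by
          rw [hwdef]
          show ‖Complex.exp ((t : ℂ) * Complex.I * ((ε k * μ k : ℝ) : ℂ))‖ = 1
          have heq : (t : ℂ) * Complex.I * ((ε k * μ k : ℝ) : ℂ)
              = ((t * (ε k * μ k) : ℝ) : ℂ) * Complex.I := by push_cast; ring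
          rw [heq, Complex.norm_exp_ofReal_mul_I]
        rw [this])
      (fun k _ => by
        have : ‖a k‖ = 1 := by
          rw [hadef]
          rcases hε1 k with h | h
          · simp only [h]
            norm_num [hγabs]
          · simp only [h, if_pos rfl]
            simp [hγabs]
        rw [this])
  have hsumbound : ∑ k : V, ‖w k - a k‖ ≤ 1 := by
    have h1 : ∑ k : V, ‖w k - a k‖ ≤ ∑ k : V, 1 / (2 * n : ℝ) :=
      Finset.sum_le_sum (fun k _ => hwa k)
    rw [Finset.sum_const, Finset.card_univ, hcard, nsmul_eq_mul] at h1
    have h2 : ((2 * n : ℕ) : ℝ) * (1 / (2 * n : ℝ)) = 1 := by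
      have : (0:ℝ) < 2 * n := by positivity
      push_cast
      field_simp
    rw [h2] at h1
    exact h1
  rw [hprodw, hproda] at hfinal
  norm_num at hfinal
  linarith [hfinal.trans hsumbound]
end
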